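/- arXiv:math/0503644 — 4 statements merged into one kernel-verified Lean document; each statement's English description precedes it below -/
import Mathlib

section
/- Let (K,d) be a metric space in which every set of finite diameter is relatively compact, and let (K_{i(e)}, w_e, p_e)_{e∈E} be a contractive Markov system with average contracting rate a ∈ (0,1) such that K_1,…,K_N are nonempty open subsets partitioning K and each restriction p_e|_{K_{i(e)}} is continuous on K_{i(e)}. Then for every x ∈ K the sequence of measures ((U*)^k δ_x)_{k∈ℕ} is tight: for every ε > 0 there exists a compact subset Q ⊆ K with ((U*)^k δ_x)(Q) ≥ 1 − ε for all k ∈ ℕ. -/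
open MeasureTheory Filter Topology
open scoped ENNReal

/-- A contractive Markov system (CMS) on a metric space `K`, with vertex set `Fin N`
and (finite) edge set `E`. -/
structure CMS (K : Type*) [MetricSpace K] [MeasurableSpace K]
    (N : ℕ) (E : Type*) [Fintype E] where
  ι : E → Fin N
  τ : E → Fin N
  Ks : Fin N → Set K
  Ks_nonempty : ∀ i, (Ks i).Nonempty
  Ks_meas : ∀ i, MeasurableSet (Ks i)
  Ks_disj : ∀ i j, i ≠ j → Disjoint (Ks i) (Ks j)
  Ks_cover : (⋃ i, Ks i) = Set.univ
  w : E → K → K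
  w_meas : ∀ e, Measurable (w e)
  w_maps : ∀ e, Set.MapsTo (w e) (Ks (ι e)) (Ks (τ e))
  p : E → K → ℝ
  p_meas : ∀ e, Measurable (p e)
  p_nonneg : ∀ e x, 0 ≤ p e x
  p_sum_one : ∀ x, ∑ e, p e x = 1
  p_zero : ∀ e x, x ∉ Ks (ι e) → p e x = 0
  a : ℝ
  a_pos : 0 < a
  a_lt_one : a < 1
  contractive : ∀ i, ∀ x ∈ Ks i, ∀ y ∈ Ks i,
    ∑ e, p e x * dist (w e x) (w e y) ≤ a * dist x y

namespace CMS

variable {K : Type*} [MetricSpace K] [MeasurableSpace K]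
  {N : ℕ} {E : Type*} [Fintype E]

/-- The Markov operator `U` acting on functions. -/
noncomputable def Ufun (S : CMS K N E) (f : K → ℝ) : K → ℝ :=
  fun x => ∑ e, S.p e x * f (S.w e x)

/-- The adjoint Markov operator `U*` acting on measures. -/
noncomputable def adjoint (S : CMS K N E) (ν : Measure K) : Measure K :=
  ν.bind fun x => ∑ e, ENNReal.ofReal (S.p e x) • Measure.dirac (S.w e x)

/-- The weight `p_{e₁}(x) p_{e₂}(w_{e₁} x) ⋯` of a cylinder `[e₁, …, e_k]` started at `x`. -/
noncomputable def cylWeight (S : CMS K N E) : K → List E → ℝ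
  | _, [] => 1
  | x, e :: es => S.p e x * S.cylWeight (S.w e x) es

/-- `M` is the generalized Markov measure associated with the CMS and invariant measure `μ`. -/
def IsGMarkovMeasure [MeasurableSpace E] (S : CMS K N E)
    (μ : Measure K) (M : Measure (ℤ → E)) : Prop :=
  IsProbabilityMeasure M ∧
  ∀ (m : ℤ) (es : List E),
    M {σ | ∀ j : Fin es.length, σ (m + (j : ℕ)) = es.get j} =
      ENNReal.ofReal (∫ x, S.cylWeight x es ∂μ)

/-- `comp S σ n = w_{σ 0} ∘ w_{σ (-1)} ∘ ⋯ ∘ w_{σ (-n)}`. -/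
noncomputable def comp (S : CMS K N E) (σ : ℤ → E) : ℕ → K → K
  | 0, x => S.w (σ 0) x
  | n + 1, x => S.comp σ n (S.w (σ (-((n : ℤ) + 1))) x)

/-- `codeSeq S xs σ n = w_{σ 0} ∘ ⋯ ∘ w_{σ (-n)} (x_{i(σ (-n))})`. -/
noncomputable def codeSeq (S : CMS K N E) (xs : Fin N → K) (σ : ℤ → E) (n : ℕ) : K :=
  S.comp σ n (xs (S.ι (σ (-(n : ℤ)))))

end CMS

/-- The left shift `S` on `Σ = E^ℤ`. -/
def shiftL (E : Type*) : (ℤ → E) → ℤ → E := fun σ j => σ (j + 1)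

/-- The `n`-fold left shift `S^n` on `Σ = E^ℤ`, `n ∈ ℤ`. -/
def shiftZ (E : Type*) (n : ℤ) : (ℤ → E) → ℤ → E := fun σ j => σ (j + n)

namespace CMS

variable {K : Type*} [MetricSpace K] [MeasurableSpace K]
  {N : ℕ} {E : Type*} [Fintype E]

/-- The subshift `Σ_G` of (two-sided) paths of the directed multigraph. -/
def SigmaG (S : CMS K N E) : Set (ℤ → E) :=
  {σ | ∀ j : ℤ, S.τ (σ j) = S.ι (σ (j + 1))}

/-- The set `D` of paths where the coding limit exists. -/
def Dset (S : CMS K N E) (xs : Fin N → K) : Set (ℤ → E) :=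
  {σ ∈ S.SigmaG | ∃ L : K, Tendsto (S.codeSeq xs σ) atTop (nhds L)}

/-- `Y = ⋂_{n ∈ ℤ} S^n(D)`. -/
def Yset (S : CMS K N E) (xs : Fin N → K) : Set (ℤ → E) :=
  ⋂ n : ℤ, shiftZ E n '' S.Dset xs

/-- The coding map `F`. -/
noncomputable def F [Nonempty K] (S : CMS K N E) (xs : Fin N → K) (σ : ℤ → E) : K :=
  limUnder atTop (S.codeSeq xs σ)

end CMS

/-- The modulus of uniform continuity of `f` on the set `A`. -/
noncomputable def modulusOn {K : Type*} [MetricSpace K] (f : K → ℝ) (A : Set K) (t : ℝ) : ℝ :=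
  sSup {s | ∃ x ∈ A, ∃ y ∈ A, dist x y ≤ t ∧ s = |f x - f y|}

/-- Dini-continuity of `f` on `A`: `∫_0^c φ(t)/t dt < ∞` for some `c > 0`. -/
def DiniOn {K : Type*} [MetricSpace K] (f : K → ℝ) (A : Set K) : Prop :=
  ∃ c > 0, ∫⁻ t in Set.Ioc (0 : ℝ) c, ENNReal.ofReal (modulusOn f A t / t) < ⊤

section TightAux

variable {K : Type*} [MetricSpace K] [MeasurableSpace K] [BorelSpace K]
  {N : ℕ} {E : Type*} [Fintype E]

/-- The transition kernel of the CMS is a measurable measure-valued map. -/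
lemma CMS.kernel_meas (S : CMS K N E) :
    Measurable (fun y => ∑ e, ENNReal.ofReal (S.p e y) • Measure.dirac (S.w e y)) := by
  apply Measure.measurable_of_measurable_coe
  intro s hs
  simp only [Measure.finset_sum_apply, Measure.smul_apply, smul_eq_mul]
  refine Finset.measurable_sum _ fun e _ => Measurable.mul
    (ENNReal.measurable_ofReal.comp (S.p_meas e)) ?_
  simp only [Measure.dirac_apply' _ hs]
  exact (measurable_one.indicator hs).comp (S.w_meas e)

/-- Lintegral against the adjoint operator. -/
lemma CMS.lintegral_adjoint (S : CMS K N E) (ν : Measure K) (f : K → ℝ≥0∞)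
    (hf : Measurable f) :
    ∫⁻ y, f y ∂(S.adjoint ν) = ∫⁻ y, ∑ e, ENNReal.ofReal (S.p e y) * f (S.w e y) ∂ν := by
  rw [CMS.adjoint, Measure.lintegral_bind S.kernel_meas.aemeasurable hf.aemeasurable]
  refine lintegral_congr fun y => ?_
  rw [lintegral_finset_sum_measure]
  simp [lintegral_smul_measure, lintegral_dirac' _ hf]

lemma CMS.sum_ofReal_p (S : CMS K N E) (y : K) :
    ∑ e, ENNReal.ofReal (S.p e y) = 1 := by
  rw [← ENNReal.ofReal_sum_of_nonneg fun e _ => S.p_nonneg e y, S.p_sum_one, ENNReal.ofReal_one]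

/-- The adjoint operator preserves probability measures. -/
lemma CMS.adjoint_isProbability (S : CMS K N E) (ν : Measure K)
    [IsProbabilityMeasure ν] : IsProbabilityMeasure (S.adjoint ν) := by
  have h := S.lintegral_adjoint ν (fun _ => (1 : ℝ≥0∞)) measurable_one
  simp only [mul_one, lintegral_one, S.sum_ofReal_p, measure_univ] at h
  exact ⟨h⟩

lemma CMS.iterate_adjoint_isProbability (S : CMS K N E) (x : K) (k : ℕ) :
    IsProbabilityMeasure ((S.adjoint)^[k] (Measure.dirac x)) := by
  induction k with
  | zero => simpa using Measure.dirac.isProbabilityMeasure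
  | succ n ih =>
      rw [Function.iterate_succ_apply']
      haveI := ih
      exact S.adjoint_isProbability _

end TightAux

-- stmt 0
theorem cms_tight
    {K : Type*} [MetricSpace K] [MeasurableSpace K] [BorelSpace K]
    {N : ℕ} {E : Type*} [Fintype E] (S : CMS K N E)
    (hProper : ∀ A : Set K, Bornology.IsBounded A → IsCompact (closure A))
    (hOpen : ∀ i, IsOpen (S.Ks i))
    (hCont : ∀ e, ContinuousOn (S.p e) (S.Ks (S.ι e)))
    (x : K) :
    ∀ ε : ℝ, 0 < ε → ∃ Q : Set K, IsCompact Q ∧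
      ∀ k : ℕ, 1 - ENNReal.ofReal ε ≤ (S.adjoint)^[k] (Measure.dirac x) Q := by
  intro ε hε
  -- reference points in each K_i
  set xs : Fin N → K := fun i => (S.Ks_nonempty i).choose with hxs
  have hxsmem : ∀ i, xs i ∈ S.Ks i := fun i => (S.Ks_nonempty i).choose_spec
  -- K is covered, so N ≥ 1 and E is nonempty
  obtain ⟨_, ⟨i₀, rfl⟩, hxmem⟩ : x ∈ ⋃ i, S.Ks i := by rw [S.Ks_cover]; trivial
  haveI : Nonempty (Fin N) := ⟨i₀⟩
  haveI : Nonempty E := by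
    by_contra h
    have := S.p_sum_one x
    rw [not_nonempty_iff] at h
    simp [Finset.univ_eq_empty] at this
  -- constants
  set B : ℝ := Finset.univ.sup' Finset.univ_nonempty (fun i => dist x (xs i)) with hB
  set D : ℝ := Finset.univ.sup' Finset.univ_nonempty
    (fun e => dist (S.w e (xs (S.ι e))) x) with hD
  have hBi : ∀ i, dist x (xs i) ≤ B := fun i => by
    rw [hB]; exact Finset.le_sup' (fun i => dist x (xs i)) (Finset.mem_univ i)
  have hDe : ∀ e : E, dist (S.w e (xs (S.ι e))) x ≤ D := fun e => by
    rw [hD]; exact Finset.le_sup' (fun e => dist (S.w e (xs (S.ι e))) x) (Finset.mem_univ e)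
  have hBnn : 0 ≤ B := le_trans dist_nonneg (hBi i₀)
  have hDnn : 0 ≤ D := le_trans dist_nonneg (hDe (Classical.arbitrary E))
  set C : ℝ := S.a * B + D with hC
  have hCnn : 0 ≤ C := add_nonneg (mul_nonneg S.a_pos.le hBnn) hDnn
  have h1a : (0:ℝ) < 1 - S.a := by linarith [S.a_lt_one]
  set R : ℝ := C / (1 - S.a) with hR
  have hRnn : 0 ≤ R := div_nonneg hCnn h1a.le
  -- the key pointwise drift estimate (real version)
  have key : ∀ y : K, ∑ e, S.p e y * dist (S.w e y) x ≤ S.a * dist y x + C := by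
    intro y
    obtain ⟨_, ⟨i, rfl⟩, hy⟩ : y ∈ ⋃ i, S.Ks i := by rw [S.Ks_cover]; trivial
    have step1 : ∑ e, S.p e y * dist (S.w e y) x ≤
        ∑ e, S.p e y * dist (S.w e y) (S.w e (xs (S.ι e)))
          + ∑ e, S.p e y * dist (S.w e (xs (S.ι e))) x := by
      rw [← Finset.sum_add_distrib]
      refine Finset.sum_le_sum fun e _ => ?_
      rw [← mul_add]
      exact mul_le_mul_of_nonneg_left (dist_triangle _ _ _) (S.p_nonneg e y)
    have heq : ∀ e : E, S.p e y * dist (S.w e y) (S.w e (xs (S.ι e))) =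
        S.p e y * dist (S.w e y) (S.w e (xs i)) := by
      intro e
      by_cases hp : S.p e y = 0
      · simp [hp]
      · have hyi : y ∈ S.Ks (S.ι e) := by
          by_contra h; exact hp (S.p_zero e y h)
        have : S.ι e = i := by
          by_contra hne
          exact (S.Ks_disj _ _ hne).ne_of_mem hyi hy rfl
        rw [this]
    have step2 : ∑ e, S.p e y * dist (S.w e y) (S.w e (xs (S.ι e))) ≤ S.a * dist y (xs i) := by
      calc ∑ e, S.p e y * dist (S.w e y) (S.w e (xs (S.ι e)))
          = ∑ e, S.p e y * dist (S.w e y) (S.w e (xs i)) := Finset.sum_congr rfl fun e _ => heq e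
        _ ≤ S.a * dist y (xs i) := S.contractive i y hy (xs i) (hxsmem i)
    have step3 : ∑ e, S.p e y * dist (S.w e (xs (S.ι e))) x ≤ D := by
      calc ∑ e, S.p e y * dist (S.w e (xs (S.ι e))) x
          ≤ ∑ e, S.p e y * D := Finset.sum_le_sum fun e _ =>
            mul_le_mul_of_nonneg_left (hDe e) (S.p_nonneg e y)
        _ = D := by rw [← Finset.sum_mul, S.p_sum_one, one_mul]
    have step4 : S.a * dist y (xs i) ≤ S.a * dist y x + S.a * B := by
      rw [← mul_add]
      refine mul_le_mul_of_nonneg_left ?_ S.a_pos.le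
      calc dist y (xs i) ≤ dist y x + dist x (xs i) := dist_triangle _ _ _
        _ ≤ dist y x + B := add_le_add_right (hBi i) _
    calc ∑ e, S.p e y * dist (S.w e y) x
        ≤ S.a * dist y (xs i) + D := step1.trans (add_le_add step2 step3)
      _ ≤ S.a * dist y x + C := by rw [hC]; linarith [step4]
  -- the distance function, measurable
  have hdmeas : Measurable (fun y : K => ENNReal.ofReal (dist y x)) :=
    ENNReal.measurable_ofReal.comp (continuous_id.dist continuous_const).measurable
  -- the ENNReal drift bound on iterated integrals
  have main : ∀ k : ℕ,
      ∫⁻ y, ENNReal.ofReal (dist y x) ∂((S.adjoint)^[k] (Measure.dirac x)) ≤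
        ENNReal.ofReal R := by
    intro k
    induction k with
    | zero =>
        simp only [Function.iterate_zero_apply]
        rw [lintegral_dirac' _ hdmeas]
        simp
    | succ n ih =>
        rw [Function.iterate_succ_apply', S.lintegral_adjoint _ _ hdmeas]
        haveI := S.iterate_adjoint_isProbability x n
        have hbd : ∀ y : K, ∑ e, ENNReal.ofReal (S.p e y) * ENNReal.ofReal (dist (S.w e y) x)
            ≤ ENNReal.ofReal S.a * ENNReal.ofReal (dist y x) + ENNReal.ofReal C := by
          intro y
          calc ∑ e, ENNReal.ofReal (S.p e y) * ENNReal.ofReal (dist (S.w e y) x)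
              = ENNReal.ofReal (∑ e, S.p e y * dist (S.w e y) x) := by
                rw [ENNReal.ofReal_sum_of_nonneg fun e _ =>
                  mul_nonneg (S.p_nonneg e y) dist_nonneg]
                exact Finset.sum_congr rfl fun e _ =>
                  (ENNReal.ofReal_mul (S.p_nonneg e y)).symm
            _ ≤ ENNReal.ofReal (S.a * dist y x + C) := ENNReal.ofReal_le_ofReal (key y)
            _ = ENNReal.ofReal S.a * ENNReal.ofReal (dist y x) + ENNReal.ofReal C := by
                rw [ENNReal.ofReal_add (mul_nonneg S.a_pos.le dist_nonneg) hCnn,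
                  ENNReal.ofReal_mul S.a_pos.le]
        calc ∫⁻ y, ∑ e, ENNReal.ofReal (S.p e y) * ENNReal.ofReal (dist (S.w e y) x)
              ∂((S.adjoint)^[n] (Measure.dirac x))
            ≤ ∫⁻ y, (ENNReal.ofReal S.a * ENNReal.ofReal (dist y x) + ENNReal.ofReal C)
              ∂((S.adjoint)^[n] (Measure.dirac x)) := lintegral_mono hbd
          _ = ENNReal.ofReal S.a *
              (∫⁻ y, ENNReal.ofReal (dist y x) ∂((S.adjoint)^[n] (Measure.dirac x)))
              + ENNReal.ofReal C := by
                rw [lintegral_add_right _ measurable_const, lintegral_const_mul _ hdmeas,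
                  lintegral_const, measure_univ, mul_one]
          _ ≤ ENNReal.ofReal S.a * ENNReal.ofReal R + ENNReal.ofReal C := by
                exact add_le_add_left (mul_le_mul_right ih _) _
          _ = ENNReal.ofReal R := by
                rw [← ENNReal.ofReal_mul S.a_pos.le,
                  ← ENNReal.ofReal_add (mul_nonneg S.a_pos.le hRnn) hCnn]
                congr 1
                rw [hR]
                field_simp
                ring
  -- choose radius and compact set
  set r : ℝ := R / ε + 1 with hr
  have hrpos : 0 < r := by positivity
  refine ⟨Metric.closedBall x r, ?_, ?_⟩
  · exact (hProper _ Metric.isBounded_closedBall).of_isClosed_subset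
      Metric.isClosed_closedBall subset_closure
  · intro k
    haveI := S.iterate_adjoint_isProbability x k
    set μ := (S.adjoint)^[k] (Measure.dirac x) with hμ
    have hsubset : (Metric.closedBall x r)ᶜ ⊆ {y | ENNReal.ofReal r ≤ ENNReal.ofReal (dist y x)} := by
      intro y hy
      simp only [Set.mem_compl_iff, Metric.mem_closedBall, not_le] at hy
      exact ENNReal.ofReal_le_ofReal hy.le
    have hmarkov : μ (Metric.closedBall x r)ᶜ ≤ ENNReal.ofReal ε := by
      calc μ (Metric.closedBall x r)ᶜ
          ≤ μ {y | ENNReal.ofReal r ≤ ENNReal.ofReal (dist y x)} := measure_mono hsubset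
        _ ≤ (∫⁻ y, ENNReal.ofReal (dist y x) ∂μ) / ENNReal.ofReal r :=
            meas_ge_le_lintegral_div hdmeas.aemeasurable
              (by simp [ENNReal.ofReal_pos.mpr hrpos, ne_of_gt]) ENNReal.ofReal_ne_top
        _ ≤ ENNReal.ofReal R / ENNReal.ofReal r :=
            ENNReal.div_le_div_right (main k) _
        _ ≤ ENNReal.ofReal ε := by
            rw [ENNReal.div_le_iff (by simp [ENNReal.ofReal_pos.mpr hrpos, ne_of_gt])
              ENNReal.ofReal_ne_top, ← ENNReal.ofReal_mul hε.le]
            refine ENNReal.ofReal_le_ofReal ?_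
            rw [hr, mul_add, mul_one, mul_div_cancel₀ _ (ne_of_gt hε)]
            linarith
    have : (1 : ℝ≥0∞) ≤ μ (Metric.closedBall x r) + ENNReal.ofReal ε := by
      calc (1 : ℝ≥0∞) = μ Set.univ := (measure_univ).symm
        _ ≤ μ (Metric.closedBall x r) + μ (Metric.closedBall x r)ᶜ :=
            measure_univ_le_add_compl _
        _ ≤ μ (Metric.closedBall x r) + ENNReal.ofReal ε := add_le_add_right hmarkov _
    exact tsub_le_iff_right.mpr this
end

section
/- Let (K,d) be a metric space in which every set of finite diameter is relatively compact, and let (K_{i(e)}, w_e, p_e)_{e∈E} be a contractive Markov system with average contracting rate a ∈ (0,1) such that K_1,…,K_N are nonempty open subsets partitioning K and each restriction p_e|_{K_{i(e)}} is continuous on K_{i(e)}. If the system has a unique invariant Borel probability measure μ, then ∑_{i=1}^N ∫_{K_i} d(x, x_i) dμ(x) < ∞ for every choice of points x_i ∈ K_i, i = 1,…,N. -/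
open MeasureTheory Filter Topology
open scoped ENNReal

namespace CMSAux

open CMS

variable {K : Type*} [MetricSpace K] [MeasurableSpace K] {N : ℕ} {E : Type*} [Fintype E]

/-- The Markov operator on `ℝ≥0∞`-valued functions. -/
noncomputable def Ue (S : CMS K N E) (g : K → ℝ≥0∞) : K → ℝ≥0∞ :=
  fun x => ∑ e, ENNReal.ofReal (S.p e x) * g (S.w e x)

lemma sum_ofReal_p (S : CMS K N E) (x : K) : ∑ e, ENNReal.ofReal (S.p e x) = 1 := by
  rw [← ENNReal.ofReal_sum_of_nonneg fun e _ => S.p_nonneg e x, S.p_sum_one, ENNReal.ofReal_one]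

lemma ofReal_p_le_one (S : CMS K N E) (e : E) (x : K) : ENNReal.ofReal (S.p e x) ≤ 1 := by
  rw [← sum_ofReal_p S x]
  exact Finset.single_le_sum (f := fun e => ENNReal.ofReal (S.p e x))
    (fun e _ => zero_le) (Finset.mem_univ e)

lemma Ue_mono (S : CMS K N E) {g h : K → ℝ≥0∞} (hgh : ∀ x, g x ≤ h x) (x : K) :
    Ue S g x ≤ Ue S h x :=
  Finset.sum_le_sum fun e _ => mul_le_mul_right (hgh _) _

lemma Ue_min_le (S : CMS K N E) (g : K → ℝ≥0∞) (n : ℝ≥0∞) (x : K) :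
    Ue S (fun y => min (g y) n) x ≤ min (Ue S g x) n := by
  refine le_min (Ue_mono S (fun y => min_le_left _ _) x) ?_
  calc Ue S (fun y => min (g y) n) x
      ≤ ∑ e, ENNReal.ofReal (S.p e x) * n :=
        Finset.sum_le_sum fun e _ => mul_le_mul_right (min_le_right _ _) _
    _ = n := by rw [← Finset.sum_mul, sum_ofReal_p, one_mul]

lemma Ue_affine (S : CMS K N E) (g : K → ℝ≥0∞) (c d : ℝ≥0∞) (x : K) :
    Ue S (fun y => c * g y + d) x = c * Ue S g x + d := by
  unfold Ue
  calc ∑ e, ENNReal.ofReal (S.p e x) * (c * g (S.w e x) + d)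
      = ∑ e, (c * (ENNReal.ofReal (S.p e x) * g (S.w e x)) + ENNReal.ofReal (S.p e x) * d) := by
        refine Finset.sum_congr rfl fun e _ => ?_; ring
    _ = c * ∑ e, ENNReal.ofReal (S.p e x) * g (S.w e x)
        + (∑ e, ENNReal.ofReal (S.p e x)) * d := by
        rw [Finset.sum_add_distrib, Finset.mul_sum, Finset.sum_mul]
    _ = _ := by rw [sum_ofReal_p, one_mul]

lemma measurable_Ue [BorelSpace K] (S : CMS K N E) {g : K → ℝ≥0∞} (hg : Measurable g) :
    Measurable (Ue S g) :=
  Finset.measurable_sum _ fun e _ => ((S.p_meas e).ennreal_ofReal).mul (hg.comp (S.w_meas e))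

lemma lintegral_adjoint (S : CMS K N E) (ν : MeasureTheory.Measure K)
    {g : K → ℝ≥0∞} (hg : Measurable g) :
    ∫⁻ x, g x ∂(S.adjoint ν) = ∫⁻ x, Ue S g x ∂ν := by
  have hκ : Measurable
      (fun x => ∑ e, ENNReal.ofReal (S.p e x) • MeasureTheory.Measure.dirac (S.w e x) :
        K → MeasureTheory.Measure K) := by
    apply MeasureTheory.Measure.measurable_of_measurable_coe
    intro s hs
    simp only [MeasureTheory.Measure.finset_sum_apply, MeasureTheory.Measure.smul_apply,
      smul_eq_mul, MeasureTheory.Measure.dirac_apply' _ hs]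
    exact Finset.measurable_sum _ fun e _ =>
      ((S.p_meas e).ennreal_ofReal).mul ((measurable_one.indicator hs).comp (S.w_meas e))
  rw [CMS.adjoint, MeasureTheory.Measure.lintegral_bind hκ.aemeasurable hg.aemeasurable]
  refine MeasureTheory.lintegral_congr fun x => ?_
  rw [MeasureTheory.lintegral_finset_sum_measure]
  refine Finset.sum_congr rfl fun e _ => ?_
  rw [MeasureTheory.lintegral_smul_measure, MeasureTheory.lintegral_dirac' _ hg, smul_eq_mul]

end CMSAux

-- stmt 3
theorem cms_unique_finite_moment
    {K : Type*} [MetricSpace K] [MeasurableSpace K] [BorelSpace K]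
    {N : ℕ} {E : Type*} [Fintype E] (S : CMS K N E)
    (hProper : ∀ A : Set K, Bornology.IsBounded A → IsCompact (closure A))
    (hOpen : ∀ i, IsOpen (S.Ks i))
    (hCont : ∀ e, ContinuousOn (S.p e) (S.Ks (S.ι e)))
    (μ : Measure K) (hμ : IsProbabilityMeasure μ) (hinv : S.adjoint μ = μ)
    (huniq : ∀ ν : Measure K, IsProbabilityMeasure ν → S.adjoint ν = ν → ν = μ) :
    ∀ xs : Fin N → K, (∀ i, xs i ∈ S.Ks i) →
      ∑ i, ∫⁻ x in S.Ks i, ENNReal.ofReal (dist x (xs i)) ∂μ < ⊤ := by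
  intro xs hxs
  classical
  open CMSAux in
  set a' := ENNReal.ofReal S.a with ha'def
  have ha'1 : a' < 1 := by
    rw [ha'def]
    exact ENNReal.ofReal_lt_one.2 S.a_lt_one
  -- the function f
  set f : K → ℝ≥0∞ :=
    fun x => ∑ i, (S.Ks i).indicator (fun y => ENNReal.ofReal (dist y (xs i))) x with hfdef
  have hdistmeas : ∀ i : Fin N, Measurable fun y : K => ENNReal.ofReal (dist y (xs i)) :=
    fun i => (Continuous.measurable (continuous_id.dist continuous_const)).ennreal_ofReal
  have hfmeas : Measurable f :=
    Finset.measurable_sum _ fun i _ => ((hdistmeas i).indicator (S.Ks_meas i))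
  have hffin : ∀ x, f x ≠ ⊤ := by
    intro x
    refine (ENNReal.sum_lt_top.2 fun i _ => ?_).ne
    exact lt_of_le_of_lt (Set.indicator_le_self _ _ x) ENNReal.ofReal_lt_top
  have hfval : ∀ i, ∀ x ∈ S.Ks i, f x = ENNReal.ofReal (dist x (xs i)) := by
    intro i x hx
    rw [hfdef]
    dsimp only
    rw [Finset.sum_eq_single i]
    · rw [Set.indicator_of_mem hx]
    · intro j _ hji
      exact Set.indicator_of_notMem
        (fun hxj => Set.disjoint_left.mp (S.Ks_disj j i hji) hxj hx) _
    · exact fun h => absurd (Finset.mem_univ i) h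
  -- the constants
  set C : ℝ≥0∞ := ∑ e, ENNReal.ofReal (dist (S.w e (xs (S.ι e))) (xs (S.τ e))) with hCdef
  have hCfin : C ≠ ⊤ := (ENNReal.sum_lt_top.2 fun e _ => ENNReal.ofReal_lt_top).ne
  set D : ℝ≥0∞ := C * (1 - a')⁻¹ with hDdef
  have hDfin : D ≠ ⊤ := by
    refine ENNReal.mul_ne_top hCfin (ENNReal.inv_ne_top.2 ?_)
    exact (tsub_pos_of_lt ha'1).ne'
  -- the key contraction estimate
  have hkey : ∀ x, Ue S f x ≤ a' * f x + C := by
    intro x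
    have hxmem : x ∈ ⋃ i, S.Ks i := S.Ks_cover.symm ▸ Set.mem_univ x
    obtain ⟨i, hx⟩ := Set.mem_iUnion.mp hxmem
    have hterm : ∀ e, ENNReal.ofReal (S.p e x) * f (S.w e x)
        ≤ ENNReal.ofReal (S.p e x) * ENNReal.ofReal (dist (S.w e x) (S.w e (xs i)))
          + ENNReal.ofReal (dist (S.w e (xs (S.ι e))) (xs (S.τ e))) := by
      intro e
      by_cases hie : S.ι e = i
      · subst hie
        have hwx : S.w e x ∈ S.Ks (S.τ e) := S.w_maps e hx
        rw [hfval _ _ hwx]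
        have htri : dist (S.w e x) (xs (S.τ e))
            ≤ dist (S.w e x) (S.w e (xs (S.ι e))) + dist (S.w e (xs (S.ι e))) (xs (S.τ e)) :=
          dist_triangle _ _ _
        calc ENNReal.ofReal (S.p e x) * ENNReal.ofReal (dist (S.w e x) (xs (S.τ e)))
            ≤ ENNReal.ofReal (S.p e x) *
              (ENNReal.ofReal (dist (S.w e x) (S.w e (xs (S.ι e))))
                + ENNReal.ofReal (dist (S.w e (xs (S.ι e))) (xs (S.τ e)))) := by
              refine mul_le_mul_right ?_ _
              refine le_trans (ENNReal.ofReal_le_ofReal htri) ?_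
              rw [ENNReal.ofReal_add dist_nonneg dist_nonneg]
          _ ≤ _ := by
              rw [mul_add]
              refine add_le_add_right ?_ _
              calc ENNReal.ofReal (S.p e x)
                    * ENNReal.ofReal (dist (S.w e (xs (S.ι e))) (xs (S.τ e)))
                  ≤ 1 * ENNReal.ofReal (dist (S.w e (xs (S.ι e))) (xs (S.τ e))) :=
                    mul_le_mul_left (ofReal_p_le_one S e x) _
                _ = _ := one_mul _
      · have hx' : x ∉ S.Ks (S.ι e) := fun hxe =>
          Set.disjoint_left.mp (S.Ks_disj _ _ hie) hxe hx
        rw [S.p_zero e x hx', ENNReal.ofReal_zero, zero_mul]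
        exact zero_le
    calc Ue S f x
        ≤ ∑ e, (ENNReal.ofReal (S.p e x) * ENNReal.ofReal (dist (S.w e x) (S.w e (xs i)))
            + ENNReal.ofReal (dist (S.w e (xs (S.ι e))) (xs (S.τ e)))) :=
          Finset.sum_le_sum fun e _ => hterm e
      _ = (∑ e, ENNReal.ofReal (S.p e x) * ENNReal.ofReal (dist (S.w e x) (S.w e (xs i)))) + C := by
          rw [Finset.sum_add_distrib]
      _ ≤ a' * f x + C := by
          refine add_le_add_left ?_ _
          have hprod : ∀ e : E, ENNReal.ofReal (S.p e x)
              * ENNReal.ofReal (dist (S.w e x) (S.w e (xs i)))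
              = ENNReal.ofReal (S.p e x * dist (S.w e x) (S.w e (xs i))) :=
            fun e => (ENNReal.ofReal_mul (S.p_nonneg e x)).symm
          rw [Finset.sum_congr rfl fun e _ => hprod e,
            ← ENNReal.ofReal_sum_of_nonneg (fun e _ => mul_nonneg (S.p_nonneg e x) dist_nonneg),
            hfval i x hx, ha'def, ← ENNReal.ofReal_mul S.a_pos.le]
          exact ENNReal.ofReal_le_ofReal (S.contractive i x hx (xs i) (hxs i))
  -- iterates
  have hitermeas : ∀ k, ∀ g : K → ℝ≥0∞, Measurable g → Measurable ((Ue S)^[k] g) := by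
    intro k
    induction k with
    | zero => intro g hg; simpa using hg
    | succ k ih =>
      intro g hg
      rw [Function.iterate_succ_apply']
      exact measurable_Ue S (ih g hg)
  have hinv1 : ∀ g : K → ℝ≥0∞, Measurable g → ∫⁻ x, g x ∂μ = ∫⁻ x, Ue S g x ∂μ := by
    intro g hg
    conv_lhs => rw [← hinv]
    exact lintegral_adjoint S μ hg
  have hinvk : ∀ k, ∀ g : K → ℝ≥0∞, Measurable g →
      ∫⁻ x, g x ∂μ = ∫⁻ x, (Ue S)^[k] g x ∂μ := by
    intro k
    induction k with
    | zero => intro g hg; simp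
    | succ k ih =>
      intro g hg
      calc ∫⁻ x, g x ∂μ = ∫⁻ x, (Ue S)^[k] g x ∂μ := ih g hg
        _ = ∫⁻ x, Ue S ((Ue S)^[k] g) x ∂μ := hinv1 _ (hitermeas k g hg)
        _ = ∫⁻ x, (Ue S)^[k + 1] g x ∂μ := by
            refine MeasureTheory.lintegral_congr fun x => ?_
            rw [Function.iterate_succ_apply']
  have htrunc : ∀ k (n : ℝ≥0∞) (x : K),
      (Ue S)^[k] (fun y => min (f y) n) x ≤ min ((Ue S)^[k] f x) n := by
    intro k
    induction k with
    | zero => intro n x; simp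
    | succ k ih =>
      intro n x
      rw [Function.iterate_succ_apply', Function.iterate_succ_apply']
      calc Ue S ((Ue S)^[k] fun y => min (f y) n) x
          ≤ Ue S (fun y => min ((Ue S)^[k] f y) n) x := Ue_mono S (fun y => ih n y) x
        _ ≤ min (Ue S ((Ue S)^[k] f) x) n := Ue_min_le S _ n x
  have hiter : ∀ k (x : K),
      (Ue S)^[k] f x ≤ a' ^ k * f x + C * ∑ j ∈ Finset.range k, a' ^ j := by
    intro k
    induction k with
    | zero => intro x; simp
    | succ k ih =>
      intro x
      rw [Function.iterate_succ_apply']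
      calc Ue S ((Ue S)^[k] f) x
          ≤ Ue S (fun y => a' ^ k * f y + C * ∑ j ∈ Finset.range k, a' ^ j) x :=
            Ue_mono S ih x
        _ = a' ^ k * Ue S f x + C * ∑ j ∈ Finset.range k, a' ^ j := Ue_affine S f _ _ x
        _ ≤ a' ^ k * (a' * f x + C) + C * ∑ j ∈ Finset.range k, a' ^ j := by
            gcongr
            exact hkey x
        _ = a' ^ (k + 1) * f x + C * ∑ j ∈ Finset.range (k + 1), a' ^ j := by
            rw [Finset.sum_range_succ]
            ring
  have hiterD : ∀ k (x : K), (Ue S)^[k] f x ≤ a' ^ k * f x + D := by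
    intro k x
    refine le_trans (hiter k x) (add_le_add_right ?_ _)
    rw [hDdef]
    refine mul_le_mul_right ?_ _
    rw [← ENNReal.tsum_geometric a']
    exact ENNReal.sum_le_tsum _
  -- main estimate for truncations
  have hmain : ∀ n : ℕ, ∫⁻ x, min (f x) (n : ℝ≥0∞) ∂μ ≤ D := by
    intro n
    have hfn : Measurable fun x => min (f x) (n : ℝ≥0∞) := hfmeas.min measurable_const
    have hstep : ∀ k, ∫⁻ x, min (f x) (n : ℝ≥0∞) ∂μ
        ≤ (∫⁻ x, min (a' ^ k * f x) (n : ℝ≥0∞) ∂μ) + D := by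
      intro k
      calc ∫⁻ x, min (f x) (n : ℝ≥0∞) ∂μ
          = ∫⁻ x, (Ue S)^[k] (fun y => min (f y) (n : ℝ≥0∞)) x ∂μ := hinvk k _ hfn
        _ ≤ ∫⁻ x, min ((Ue S)^[k] f x) (n : ℝ≥0∞) ∂μ :=
            MeasureTheory.lintegral_mono fun x => htrunc k _ x
        _ ≤ ∫⁻ x, (min (a' ^ k * f x) (n : ℝ≥0∞) + D) ∂μ := by
            refine MeasureTheory.lintegral_mono fun x => ?_
            calc min ((Ue S)^[k] f x) (n : ℝ≥0∞)
                ≤ min (a' ^ k * f x + D) (n : ℝ≥0∞) := min_le_min (hiterD k x) le_rfl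
              _ ≤ min (a' ^ k * f x + D) ((n : ℝ≥0∞) + D) := min_le_min le_rfl le_self_add
              _ = min (a' ^ k * f x) (n : ℝ≥0∞) + D := min_add_add_right _ _ _
        _ = (∫⁻ x, min (a' ^ k * f x) (n : ℝ≥0∞) ∂μ) + D := by
            rw [MeasureTheory.lintegral_add_right _ measurable_const,
              MeasureTheory.lintegral_const, MeasureTheory.measure_univ, mul_one]
    have htend0 : Tendsto (fun k => ∫⁻ x, min (a' ^ k * f x) (n : ℝ≥0∞) ∂μ) atTop (𝓝 0) := by
      have hptw : ∀ x : K, Tendsto (fun k => min (a' ^ k * f x) (n : ℝ≥0∞)) atTop (𝓝 0) := by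
        intro x
        have h1 : Tendsto (fun k => a' ^ k * f x) atTop (𝓝 0) := by
          have := ENNReal.Tendsto.mul_const
            (ENNReal.tendsto_pow_atTop_nhds_zero_of_lt_one ha'1) (Or.inr (hffin x))
          simpa using this
        exact tendsto_of_tendsto_of_tendsto_of_le_of_le tendsto_const_nhds h1
          (fun k => zero_le) (fun k => min_le_left _ _)
      have h := MeasureTheory.tendsto_lintegral_of_dominated_convergence
        (μ := μ) (F := fun k x => min (a' ^ k * f x) (n : ℝ≥0∞)) (f := fun _ => (0 : ℝ≥0∞))
        (fun _ => (n : ℝ≥0∞))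
        (fun k => (hfmeas.const_mul _).min measurable_const)
        (fun k => Filter.Eventually.of_forall fun x => min_le_right _ _)
        (by rw [MeasureTheory.lintegral_const, MeasureTheory.measure_univ, mul_one]
            exact ENNReal.natCast_ne_top n)
        (Filter.Eventually.of_forall hptw)
      simpa using h
    have hten : Tendsto (fun k => (∫⁻ x, min (a' ^ k * f x) (n : ℝ≥0∞) ∂μ) + D)
        atTop (𝓝 (0 + D)) := htend0.add tendsto_const_nhds
    have := ge_of_tendsto' hten hstep
    simpa using this
  -- conclude by monotone convergence
  have hsupf : ∫⁻ x, f x ∂μ ≤ D := by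
    have hmono : Monotone fun (n : ℕ) (x : K) => min (f x) (n : ℝ≥0∞) := by
      intro i j hij x
      exact min_le_min le_rfl (Nat.cast_le.2 hij)
    have heq : ∫⁻ x, f x ∂μ = ⨆ n : ℕ, ∫⁻ x, min (f x) (n : ℝ≥0∞) ∂μ := by
      rw [← MeasureTheory.lintegral_iSup (fun n => hfmeas.min measurable_const) hmono]
      refine MeasureTheory.lintegral_congr fun x => ?_
      refine le_antisymm ?_ (iSup_le fun n => min_le_left _ _)
      obtain ⟨n, hn⟩ := ENNReal.exists_nat_gt (hffin x)
      exact le_trans (le_min le_rfl hn.le) (le_iSup (fun n : ℕ => min (f x) (n : ℝ≥0∞)) n)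
    rw [heq]
    exact iSup_le hmain
  -- rewrite the goal
  calc ∑ i, ∫⁻ x in S.Ks i, ENNReal.ofReal (dist x (xs i)) ∂μ
      = ∑ i, ∫⁻ x, (S.Ks i).indicator (fun y => ENNReal.ofReal (dist y (xs i))) x ∂μ := by
        exact Finset.sum_congr rfl fun i _ =>
          (MeasureTheory.lintegral_indicator (S.Ks_meas i) _).symm
    _ = ∫⁻ x, f x ∂μ :=
        (MeasureTheory.lintegral_finset_sum _ fun i _ =>
          (hdistmeas i).indicator (S.Ks_meas i)).symm
    _ ≤ D := hsupf
    _ < ⊤ := hDfin.lt_top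
end

section
/- Let (K_{i(e)}, w_e, p_e)_{e∈E} be a contractive Markov system with average contracting rate a ∈ (0,1) on a metric space in which every set of finite diameter is relatively compact, with K_1,…,K_N nonempty open sets, each p_e|_{K_{i(e)}} uniformly continuous and bounded below by some δ > 0, with an invariant Borel probability measure μ and associated generalized Markov measure M. If each p_e|_{K_{i(e)}} is Dini-continuous, then M(Y) = 1, where Y := ⋂_{n∈ℤ} S^n(D) and D is the set of σ ∈ Σ_G for which the coding-map limit exists. -/
open MeasureTheory Filter Topology
open scoped ENNReal

namespace CMS

variable {K : Type*} [MetricSpace K] [MeasurableSpace K]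
  {N : ℕ} {E : Type*} [Fintype E]

lemma comp_unique (S : CMS K N E) {x : K} {i j : Fin N}
    (hi : x ∈ S.Ks i) (hj : x ∈ S.Ks j) : i = j := by
  by_contra h
  exact Set.disjoint_left.mp (S.Ks_disj i j h) hi hj

lemma mem_of_p_ne (S : CMS K N E) {e : E} {x : K} (h : S.p e x ≠ 0) :
    x ∈ S.Ks (S.ι e) := by
  by_contra hx; exact h (S.p_zero e x hx)

lemma p_le_one (S : CMS K N E) (e : E) (x : K) : S.p e x ≤ 1 := by
  calc S.p e x ≤ ∑ e', S.p e' x :=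
        Finset.single_le_sum (fun e' _ => S.p_nonneg e' x) (Finset.mem_univ e)
  _ = 1 := S.p_sum_one x

lemma exists_mem_Ks (S : CMS K N E) (x : K) : ∃ i, x ∈ S.Ks i :=
  Set.mem_iUnion.mp (S.Ks_cover ▸ Set.mem_univ x)

noncomputable def cIdx (S : CMS K N E) (x : K) : Fin N := (S.exists_mem_Ks x).choose

lemma mem_cIdx (S : CMS K N E) (x : K) : x ∈ S.Ks (S.cIdx x) :=
  (S.exists_mem_Ks x).choose_spec

lemma cIdx_eq (S : CMS K N E) {x : K} {i : Fin N} (h : x ∈ S.Ks i) : S.cIdx x = i :=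
  S.comp_unique (S.mem_cIdx x) h

noncomputable def pm (S : CMS K N E) (es : List E) (x : K) : K :=
  es.foldl (fun y e => S.w e y) x

@[simp] lemma pm_nil (S : CMS K N E) (x : K) : S.pm [] x = x := rfl

@[simp] lemma pm_cons (S : CMS K N E) (e : E) (es : List E) (x : K) :
    S.pm (e :: es) x = S.pm es (S.w e x) := rfl

@[simp] lemma cylWeight_nil (S : CMS K N E) (x : K) : S.cylWeight x [] = 1 := rfl

@[simp] lemma cylWeight_cons (S : CMS K N E) (x : K) (e : E) (es : List E) :
    S.cylWeight x (e :: es) = S.p e x * S.cylWeight (S.w e x) es := rfl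

lemma cylWeight_nonneg (S : CMS K N E) (es : List E) : ∀ x : K, 0 ≤ S.cylWeight x es := by
  induction es with
  | nil => intro x; simp
  | cons e es ih => intro x; simpa using mul_nonneg (S.p_nonneg e x) (ih (S.w e x))

lemma cylWeight_le_one (S : CMS K N E) (es : List E) : ∀ x : K, S.cylWeight x es ≤ 1 := by
  induction es with
  | nil => intro x; simp
  | cons e es ih =>
      intro x
      simp only [cylWeight_cons]
      exact mul_le_one₀ (S.p_le_one e x) (S.cylWeight_nonneg es _) (ih (S.w e x))

lemma measurable_cylWeight (S : CMS K N E) (es : List E) :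
    Measurable (fun x => S.cylWeight x es) := by
  induction es with
  | nil => simpa using measurable_const
  | cons e es ih =>
      exact (S.p_meas e).mul (ih.comp (S.w_meas e))

lemma sum_pi_succ {n : ℕ} {M : Type*} [AddCommMonoid M] (G : (Fin (n+1) → E) → M) :
    ∑ es : Fin (n+1) → E, G es = ∑ e : E, ∑ es : Fin n → E, G (Fin.cons e es) := by
  calc ∑ es : Fin (n+1) → E, G es
      = ∑ p : E × (Fin n → E), G (Fin.cons p.1 p.2) :=
        (Fintype.sum_bijective (fun p : E × (Fin n → E) => (Fin.cons p.1 p.2 : Fin (n+1) → E))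
          (by exact Function.bijective_iff_has_inverse.mpr ⟨fun f : Fin (n+1) → E => (f 0, Fin.tail f), fun p => by simp, fun f => by simp⟩) _ _ (fun p => rfl)).symm
    _ = ∑ e : E, ∑ es : Fin n → E, G (Fin.cons e es) := by exact Fintype.sum_prod_type _

end CMS

namespace CMS

variable {K : Type*} [MetricSpace K] [MeasurableSpace K]
  {N : ℕ} {E : Type*} [Fintype E]

/-- `sumD n u y = ∑ paths of length n, weight along u times dist of pushed points`. -/
noncomputable def sumD (S : CMS K N E) (n : ℕ) (u y : K) : ℝ :=
  ∑ es : Fin n → E, S.cylWeight u (List.ofFn es) *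
    dist (S.pm (List.ofFn es) u) (S.pm (List.ofFn es) y)

lemma sumD_zero (S : CMS K N E) (u y : K) : S.sumD 0 u y = dist u y := by
  simp [sumD]

lemma sumD_succ (S : CMS K N E) (n : ℕ) (u y : K) :
    S.sumD (n+1) u y = ∑ e, S.p e u * S.sumD n (S.w e u) (S.w e y) := by
  unfold sumD
  rw [sum_pi_succ]
  refine Finset.sum_congr rfl fun e _ => ?_
  rw [Finset.mul_sum]
  refine Finset.sum_congr rfl fun es _ => ?_
  simp [List.ofFn_succ, Fin.cons_zero, Fin.cons_succ, mul_assoc]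

lemma sumD_nonneg (S : CMS K N E) (n : ℕ) (u y : K) : 0 ≤ S.sumD n u y :=
  Finset.sum_nonneg fun es _ =>
    mul_nonneg (S.cylWeight_nonneg _ _) dist_nonneg

lemma sumD_le (S : CMS K N E) : ∀ (n : ℕ) (u y : K) (v : Fin N),
    u ∈ S.Ks v → y ∈ S.Ks v → S.sumD n u y ≤ S.a ^ n * dist u y := by
  intro n
  induction n with
  | zero => intro u y v hu hy; rw [sumD_zero]; simp
  | succ n ih =>
    intro u y v hu hy
    rw [sumD_succ]
    calc ∑ e, S.p e u * S.sumD n (S.w e u) (S.w e y)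
        ≤ ∑ e, S.p e u * (S.a ^ n * dist (S.w e u) (S.w e y)) := by
          refine Finset.sum_le_sum fun e _ => ?_
          rcases eq_or_ne (S.p e u) 0 with h | h
          · simp [h]
          · have hu' := S.mem_of_p_ne h
            have hv : S.ι e = v := S.comp_unique hu' hu
            have hy' : y ∈ S.Ks (S.ι e) := hv ▸ hy
            exact mul_le_mul_of_nonneg_left
              (ih (S.w e u) (S.w e y) (S.τ e) (S.w_maps e hu') (S.w_maps e hy'))
              (S.p_nonneg e u)
      _ = S.a ^ n * ∑ e, S.p e u * dist (S.w e u) (S.w e y) := by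
          rw [Finset.mul_sum]; exact Finset.sum_congr rfl fun e _ => by ring
      _ ≤ S.a ^ n * (S.a * dist u y) :=
          mul_le_mul_of_nonneg_left (S.contractive v u hu y hy) (pow_nonneg S.a_pos.le n)
      _ = S.a ^ (n+1) * dist u y := by ring

/-- `sumA m u`: weights along `u`, distance from the coded point to the orbit of `u`. -/
noncomputable def sumA (S : CMS K N E) (xs : Fin N → K) (m : ℕ) (u : K) : ℝ :=
  ∑ es : Fin (m+1) → E, S.cylWeight u (List.ofFn es) *
    dist (S.pm (List.ofFn es) (xs (S.ι (es 0)))) (S.pm (List.ofFn es) u)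

lemma sumA_eq (S : CMS K N E) (xs : Fin N → K) (m : ℕ) (u : K) :
    S.sumA xs m u = ∑ e, S.p e u * S.sumD m (S.w e u) (S.w e (xs (S.ι e))) := by
  unfold sumA sumD
  rw [sum_pi_succ]
  refine Finset.sum_congr rfl fun e _ => ?_
  rw [Finset.mul_sum]
  refine Finset.sum_congr rfl fun es _ => ?_
  simp [List.ofFn_succ, Fin.cons_zero, Fin.cons_succ, mul_assoc, dist_comm]

lemma sumA_le (S : CMS K N E) (xs : Fin N → K) (hxs : ∀ i, xs i ∈ S.Ks i)
    (m : ℕ) (u : K) (v : Fin N) (hu : u ∈ S.Ks v) :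
    S.sumA xs m u ≤ S.a ^ (m+1) * dist u (xs v) := by
  rw [sumA_eq]
  calc ∑ e, S.p e u * S.sumD m (S.w e u) (S.w e (xs (S.ι e)))
      ≤ ∑ e, S.p e u * (S.a ^ m * dist (S.w e u) (S.w e (xs v))) := by
        refine Finset.sum_le_sum fun e _ => ?_
        rcases eq_or_ne (S.p e u) 0 with h | h
        · simp [h]
        · have hu' := S.mem_of_p_ne h
          have hv : S.ι e = v := S.comp_unique hu' hu
          have h2 := S.sumD_le m (S.w e u) (S.w e (xs (S.ι e))) (S.τ e)
            (S.w_maps e hu') (S.w_maps e (hxs (S.ι e)))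
          rw [← hv]
          exact mul_le_mul_of_nonneg_left h2 (S.p_nonneg e u)
    _ = S.a ^ m * ∑ e, S.p e u * dist (S.w e u) (S.w e (xs v)) := by
        rw [Finset.mul_sum]; exact Finset.sum_congr rfl fun e _ => by ring
    _ ≤ S.a ^ m * (S.a * dist u (xs v)) :=
        mul_le_mul_of_nonneg_left (S.contractive v u hu (xs v) (hxs v)) (pow_nonneg S.a_pos.le m)
    _ = S.a ^ (m+1) * dist u (xs v) := by ring

/-- The constant `c0`. -/
noncomputable def c0 (S : CMS K N E) (xs : Fin N → K) : ℝ :=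
  ∑ e, dist (S.w e (xs (S.ι e))) (xs (S.τ e))

lemma c0_nonneg (S : CMS K N E) (xs : Fin N → K) : 0 ≤ S.c0 xs :=
  Finset.sum_nonneg fun e _ => dist_nonneg

lemma le_c0 (S : CMS K N E) (xs : Fin N → K) (e : E) :
    dist (S.w e (xs (S.ι e))) (xs (S.τ e)) ≤ S.c0 xs := by
  unfold c0
  exact Finset.single_le_sum (f := fun e' => dist (S.w e' (xs (S.ι e'))) (xs (S.τ e')))
    (fun e' _ => dist_nonneg) (Finset.mem_univ e)

/-- Distance between the two consecutive coding points for a path `es`. -/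
noncomputable def dval (S : CMS K N E) (xs : Fin N → K) (m : ℕ) (es : Fin (m+2) → E) : ℝ :=
  dist (S.pm (List.ofFn fun j : Fin (m+1) => es j.succ) (xs (S.ι (es 1))))
       (S.pm (List.ofFn es) (xs (S.ι (es 0))))

lemma dval_nonneg (S : CMS K N E) (xs : Fin N → K) (m : ℕ) (es : Fin (m+2) → E) :
    0 ≤ S.dval xs m es := dist_nonneg

noncomputable def total (S : CMS K N E) (xs : Fin N → K) (m : ℕ) (x : K) : ℝ :=
  ∑ es : Fin (m+2) → E, S.dval xs m es * S.cylWeight x (List.ofFn es)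

lemma measurable_total (S : CMS K N E) (xs : Fin N → K) (m : ℕ) :
    Measurable (S.total xs m) := by
  unfold total
  exact Finset.measurable_sum _ fun es _ => (S.measurable_cylWeight _).const_mul _

lemma total_le (S : CMS K N E) (xs : Fin N → K) (hxs : ∀ i, xs i ∈ S.Ks i)
    (m : ℕ) (x : K) :
    S.total xs m x ≤ S.a ^ (m+1) * (2 * S.a * dist x (xs (S.cIdx x)) + S.c0 xs) := by
  set i := S.cIdx x with hi
  have hxi : x ∈ S.Ks i := S.mem_cIdx x
  have h1 : S.total xs m x = ∑ e, S.p e x *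
      ∑ rest : Fin (m+1) → E, S.cylWeight (S.w e x) (List.ofFn rest) *
        S.dval xs m (Fin.cons e rest) := by
    unfold total
    rw [sum_pi_succ]
    refine Finset.sum_congr rfl fun e _ => ?_
    rw [Finset.mul_sum]
    refine Finset.sum_congr rfl fun rest _ => ?_
    simp [List.ofFn_succ, Fin.cons_zero, Fin.cons_succ]
    ring
  have hdval : ∀ (e : E) (rest : Fin (m+1) → E),
      S.dval xs m (Fin.cons e rest) ≤
        dist (S.pm (List.ofFn rest) (xs (S.ι (rest 0)))) (S.pm (List.ofFn rest) (S.w e x)) +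
        dist (S.pm (List.ofFn rest) (S.w e x)) (S.pm (List.ofFn rest) (S.w e (xs (S.ι e)))) := by
    intro e rest
    have h2 : S.dval xs m (Fin.cons e rest) =
        dist (S.pm (List.ofFn rest) (xs (S.ι (rest 0))))
             (S.pm (List.ofFn rest) (S.w e (xs (S.ι e)))) := by
      unfold dval
      have hc1 : (Fin.cons e rest : Fin (m+2) → E) 1 = rest 0 := by
        rw [← Fin.succ_zero_eq_one, Fin.cons_succ]
      have hc2 : (fun j : Fin (m+1) => (Fin.cons e rest : Fin (m+2) → E) j.succ) = rest := by
        funext j; rw [Fin.cons_succ]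
      rw [hc1, hc2]
      congr 1
      simp [List.ofFn_succ, Fin.cons_zero, Fin.cons_succ]
    rw [h2]
    exact dist_triangle _ _ _
  have hTe : ∀ e : E, S.p e x ≠ 0 →
      (∑ rest : Fin (m+1) → E, S.cylWeight (S.w e x) (List.ofFn rest) *
        S.dval xs m (Fin.cons e rest)) ≤
      S.a ^ (m+1) * (2 * dist (S.w e x) (S.w e (xs i)) + S.c0 xs) := by
    intro e hpe
    have hxe : x ∈ S.Ks (S.ι e) := S.mem_of_p_ne hpe
    have hie : S.ι e = i := S.comp_unique hxe hxi
    set u := S.w e x with hu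
    set y2 := S.w e (xs (S.ι e)) with hy2
    have hu' : u ∈ S.Ks (S.τ e) := S.w_maps e hxe
    have hy2' : y2 ∈ S.Ks (S.τ e) := S.w_maps e (hxs (S.ι e))
    calc (∑ rest : Fin (m+1) → E, S.cylWeight u (List.ofFn rest) *
            S.dval xs m (Fin.cons e rest))
        ≤ S.sumA xs m u + S.sumD (m+1) u y2 := by
          unfold sumA sumD
          rw [← Finset.sum_add_distrib]
          refine Finset.sum_le_sum fun rest _ => ?_
          rw [← mul_add]
          exact mul_le_mul_of_nonneg_left (hdval e rest) (S.cylWeight_nonneg _ _)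
      _ ≤ S.a ^ (m+1) * dist u (xs (S.τ e)) + S.a ^ (m+1) * dist u y2 := by
          gcongr
          · exact S.sumA_le xs hxs m u (S.τ e) hu'
          · exact S.sumD_le (m+1) u y2 (S.τ e) hu' hy2'
      _ ≤ S.a ^ (m+1) * (dist u y2 + S.c0 xs) + S.a ^ (m+1) * dist u y2 := by
          have ht : dist u (xs (S.τ e)) ≤ dist u y2 + S.c0 xs := by
            have h3 := dist_triangle u y2 (xs (S.τ e))
            have h4 := S.le_c0 xs e
            rw [← hy2] at h4
            linarith
          have h5 : (0:ℝ) ≤ S.a ^ (m+1) := pow_nonneg S.a_pos.le (m+1)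
          nlinarith [mul_le_mul_of_nonneg_left ht h5]
      _ = S.a ^ (m+1) * (2 * dist u y2 + S.c0 xs) := by ring
      _ = S.a ^ (m+1) * (2 * dist (S.w e x) (S.w e (xs i)) + S.c0 xs) := by rw [hu, hy2, hie]
  calc S.total xs m x
      ≤ ∑ e, S.p e x * (S.a ^ (m+1) * (2 * dist (S.w e x) (S.w e (xs i)) + S.c0 xs)) := by
        rw [h1]
        refine Finset.sum_le_sum fun e _ => ?_
        rcases eq_or_ne (S.p e x) 0 with h | h
        · simp [h]
        · exact mul_le_mul_of_nonneg_left (hTe e h) (S.p_nonneg e x)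
    _ = (S.a ^ (m+1) * 2) * (∑ e, S.p e x * dist (S.w e x) (S.w e (xs i)))
          + (S.a ^ (m+1) * S.c0 xs) * ∑ e, S.p e x := by
        have hterm : ∀ e : E, S.p e x * (S.a ^ (m+1) * (2 * dist (S.w e x) (S.w e (xs i)) + S.c0 xs))
            = (S.a ^ (m+1) * 2) * (S.p e x * dist (S.w e x) (S.w e (xs i)))
              + (S.a ^ (m+1) * S.c0 xs) * S.p e x := fun e => by ring
        rw [Finset.sum_congr rfl (fun e _ => hterm e), Finset.sum_add_distrib,
          ← Finset.mul_sum, ← Finset.mul_sum]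
    _ ≤ S.a ^ (m+1) * (2 * S.a * dist x (xs i) + S.c0 xs) := by
        rw [S.p_sum_one x]
        have hc := S.contractive i x hxi (xs i) (hxs i)
        have h5 : (0:ℝ) ≤ S.a ^ (m+1) := pow_nonneg S.a_pos.le (m+1)
        nlinarith [mul_le_mul_of_nonneg_left hc h5]

end CMS

namespace CMS

variable {K : Type*} [MetricSpace K] [MeasurableSpace K]
  {N : ℕ} {E : Type*} [Fintype E]

lemma comp_eq (S : CMS K N E) (σ : ℤ → E) : ∀ (n : ℕ) (z : K),
    S.comp σ n z = S.pm (List.ofFn fun j : Fin (n+1) => σ ((j : ℤ) - n)) z := by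
  intro n
  induction n with
  | zero =>
    intro z
    have h0 : (List.ofFn fun j : Fin 1 => σ ((j:ℤ) - ((0:ℕ):ℤ))) = [σ 0] := by
      simp
    show S.w (σ 0) z = _
    rw [h0]
    rfl
  | succ n ih =>
    intro z
    have hstep : S.comp σ (n+1) z = S.comp σ n (S.w (σ (-((n:ℤ)+1))) z) := rfl
    rw [hstep, ih]
    have hf : (List.ofFn fun j : Fin (n+1+1) => σ ((j : ℤ) - ((n+1 : ℕ) : ℤ)))
        = σ (-((n:ℤ)+1)) :: List.ofFn (fun j : Fin (n+1) => σ ((j:ℤ) - n)) := by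
      rw [List.ofFn_succ]
      congr 1
      congr 1
      funext j
      congr 1
      push_cast [Fin.val_succ]
      ring
    rw [hf, pm_cons]

lemma codeSeq_eq (S : CMS K N E) (xs : Fin N → K) (σ : ℤ → E) (m : ℕ) :
    S.codeSeq xs σ m
      = S.pm (List.ofFn fun j : Fin (m+1) => σ ((j:ℤ) - m)) (xs (S.ι (σ (-(m:ℤ))))) := by
  unfold codeSeq
  rw [comp_eq]

lemma dist_codeSeq_eq (S : CMS K N E) (xs : Fin N → K) (k : ℤ) (m : ℕ) (σ : ℤ → E)
    (es : Fin (m+2) → E)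
    (h : ∀ j : Fin (m+2), σ (-((m:ℤ)+1) - k + (j:ℕ)) = es j) :
    dist (S.codeSeq xs (shiftZ E (-k) σ) m) (S.codeSeq xs (shiftZ E (-k) σ) (m+1))
      = S.dval xs m es := by
  have hσ : ∀ t : ℤ, shiftZ E (-k) σ t = σ (t - k) := fun t => by
    simp [shiftZ, sub_eq_add_neg]
  rw [codeSeq_eq, codeSeq_eq]
  unfold dval
  have e1 : (fun j : Fin (m+1) => shiftZ E (-k) σ ((j:ℤ) - m)) = fun j => es j.succ := by
    funext j
    rw [hσ]
    have := h j.succ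
    rw [← this]
    congr 1
    push_cast [Fin.val_succ]
    ring
  have e2 : shiftZ E (-k) σ (-(m:ℤ)) = es 1 := by
    rw [hσ]
    have := h 1
    rw [← this]
    congr 1
    have h1 : ((1 : Fin (m+2)) : ℕ) = 1 := rfl
    rw [h1]
    push_cast
    ring
  have e3 : (fun j : Fin (m+1+1) => shiftZ E (-k) σ ((j:ℤ) - ((m:ℕ)+1:ℕ))) = fun j => es j := by
    funext j
    rw [hσ]
    have := h j
    rw [← this]
    congr 1
    push_cast
    ring
  have e4 : shiftZ E (-k) σ (-(((m:ℕ)+1:ℕ):ℤ)) = es 0 := by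
    rw [hσ]
    have := h 0
    rw [← this]
    congr 1
    have h0 : ((0 : Fin (m+2)) : ℕ) = 0 := rfl
    rw [h0]
    push_cast
    ring
  rw [e1, e2]
  congr 1
  rw [e3]  -- may fail due to cast forms; adjust
  rw [e4]

end CMS

namespace CMS

variable {K : Type*} [MetricSpace K] [MeasurableSpace K]
  {N : ℕ} {E : Type*} [Fintype E]

lemma lintegral_invariance (S : CMS K N E) {μ : Measure K} (hinv : S.adjoint μ = μ)
    {f : K → ℝ≥0∞} (hf : Measurable f) :
    ∫⁻ x, f x ∂μ = ∫⁻ x, ∑ e, ENNReal.ofReal (S.p e x) * f (S.w e x) ∂μ := by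
  have hκ : Measurable (fun x : K =>
      ∑ e, ENNReal.ofReal (S.p e x) • Measure.dirac (S.w e x)) := by
    refine Measure.measurable_of_measurable_coe _ fun s hs => ?_
    simp only [Measure.finset_sum_apply, Measure.smul_apply, smul_eq_mul]
    refine Finset.measurable_sum _ fun e _ => ?_
    have h1 : ∀ x : K, (Measure.dirac (S.w e x)) s = s.indicator 1 (S.w e x) := fun x =>
      Measure.dirac_apply' _ hs
    simp only [h1]
    exact (ENNReal.measurable_ofReal.comp (S.p_meas e)).mul
      ((measurable_one.indicator hs).comp (S.w_meas e))
  conv_lhs => rw [← hinv]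
  unfold adjoint
  rw [Measure.lintegral_bind hκ.aemeasurable hf.aemeasurable]
  refine lintegral_congr fun x => ?_
  rw [lintegral_finset_sum_measure]
  refine Finset.sum_congr rfl fun e _ => ?_
  rw [lintegral_smul_measure, lintegral_dirac' _ hf, smul_eq_mul]

noncomputable def gfun (S : CMS K N E) (xs : Fin N → K) (x : K) : ℝ :=
  dist x (xs (S.cIdx x))

lemma gfun_nonneg (S : CMS K N E) (xs : Fin N → K) (x : K) : 0 ≤ S.gfun xs x :=
  dist_nonneg

lemma gfun_eq_sum (S : CMS K N E) (xs : Fin N → K) :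
    S.gfun xs = fun x => ∑ i, (S.Ks i).indicator (fun y => dist y (xs i)) x := by
  funext x
  rw [Finset.sum_eq_single (S.cIdx x)]
  · rw [Set.indicator_of_mem (S.mem_cIdx x)]
    rfl
  · intro j _ hj
    exact Set.indicator_of_notMem (fun hx => hj (S.cIdx_eq hx).symm) _
  · intro h; exact absurd (Finset.mem_univ _) h

lemma measurable_gfun [OpensMeasurableSpace K] (S : CMS K N E) (xs : Fin N → K) : Measurable (S.gfun xs) := by
  rw [gfun_eq_sum]
  refine Finset.measurable_sum _ fun i _ => Measurable.indicator ?_ (S.Ks_meas i)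
  exact (continuous_id.dist continuous_const).measurable

lemma Ugfun_le (S : CMS K N E) (xs : Fin N → K) (hxs : ∀ i, xs i ∈ S.Ks i) (x : K) :
    ∑ e, S.p e x * S.gfun xs (S.w e x) ≤ S.a * S.gfun xs x + S.c0 xs := by
  have hxi : x ∈ S.Ks (S.cIdx x) := S.mem_cIdx x
  calc ∑ e, S.p e x * S.gfun xs (S.w e x)
      ≤ ∑ e, S.p e x * (dist (S.w e x) (S.w e (xs (S.cIdx x))) + S.c0 xs) := by
        refine Finset.sum_le_sum fun e _ => ?_
        rcases eq_or_ne (S.p e x) 0 with h | h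
        · simp [h]
        · have hxe : x ∈ S.Ks (S.ι e) := S.mem_of_p_ne h
          have hie : S.ι e = S.cIdx x := S.comp_unique hxe hxi
          have hw : S.w e x ∈ S.Ks (S.τ e) := S.w_maps e hxe
          have hg : S.gfun xs (S.w e x) = dist (S.w e x) (xs (S.τ e)) := by
            unfold gfun; rw [S.cIdx_eq hw]
          refine mul_le_mul_of_nonneg_left ?_ (S.p_nonneg e x)
          rw [hg]
          calc dist (S.w e x) (xs (S.τ e))
              ≤ dist (S.w e x) (S.w e (xs (S.ι e))) + dist (S.w e (xs (S.ι e))) (xs (S.τ e)) :=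
                dist_triangle _ _ _
            _ ≤ dist (S.w e x) (S.w e (xs (S.ι e))) + S.c0 xs :=
                add_le_add le_rfl (S.le_c0 xs e)
            _ = dist (S.w e x) (S.w e (xs (S.cIdx x))) + S.c0 xs := by rw [hie]
    _ = (∑ e, S.p e x * dist (S.w e x) (S.w e (xs (S.cIdx x)))) + (∑ e, S.p e x) * S.c0 xs := by
        rw [Finset.sum_mul, ← Finset.sum_add_distrib]
        exact Finset.sum_congr rfl fun e _ => by ring
    _ ≤ S.a * S.gfun xs x + S.c0 xs := by
        rw [S.p_sum_one x, one_mul]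
        exact add_le_add (S.contractive _ x hxi (xs _) (hxs _)) le_rfl

lemma moment [OpensMeasurableSpace K] (S : CMS K N E) (xs : Fin N → K) (hxs : ∀ i, xs i ∈ S.Ks i)
    {μ : Measure K} [IsProbabilityMeasure μ] (hinv : S.adjoint μ = μ) :
    ∫⁻ x, ENNReal.ofReal (S.gfun xs x) ∂μ ≠ ∞ := by
  set φ : K → ℝ≥0∞ := fun x => ENNReal.ofReal (S.gfun xs x) with hφ
  have hφm : Measurable φ := ENNReal.measurable_ofReal.comp (S.measurable_gfun xs)
  set A : ℝ≥0∞ := ENNReal.ofReal S.a with hA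
  have hA1 : A < 1 := ENNReal.ofReal_lt_one.mpr S.a_lt_one
  set C : ℝ≥0∞ := ENNReal.ofReal (S.c0 xs) with hC
  have hqsum : ∀ x : K, ∑ e, ENNReal.ofReal (S.p e x) = 1 := by
    intro x
    rw [← ENNReal.ofReal_sum_of_nonneg (fun e _ => S.p_nonneg e x), S.p_sum_one x,
      ENNReal.ofReal_one]
  have key : ∀ x, ∑ e, ENNReal.ofReal (S.p e x) * φ (S.w e x) ≤ A * φ x + C := by
    intro x
    have h1 : ∑ e, ENNReal.ofReal (S.p e x) * φ (S.w e x)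
        = ENNReal.ofReal (∑ e, S.p e x * S.gfun xs (S.w e x)) := by
      rw [ENNReal.ofReal_sum_of_nonneg
        (fun e _ => mul_nonneg (S.p_nonneg e x) (S.gfun_nonneg xs _))]
      exact Finset.sum_congr rfl fun e _ => (ENNReal.ofReal_mul (S.p_nonneg e x)).symm
    rw [h1, hA, hC, ← ENNReal.ofReal_mul S.a_pos.le,
      ← ENNReal.ofReal_add (mul_nonneg S.a_pos.le (S.gfun_nonneg xs x)) (S.c0_nonneg xs)]
    exact ENNReal.ofReal_le_ofReal (S.Ugfun_le xs hxs x)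
  have iter : ∀ (n : ℕ) (M' : ℝ≥0∞),
      ∫⁻ x, min (φ x) M' ∂μ
        ≤ ∫⁻ x, min (A^n * φ x + (∑ j ∈ Finset.range n, A^j) * C) M' ∂μ := by
    intro n
    induction n with
    | zero => intro M'; simp
    | succ n ih =>
      intro M'
      refine (ih M').trans ?_
      have hmeas : Measurable (fun x => min (A^n * φ x + (∑ j ∈ Finset.range n, A^j) * C) M') :=
        (((hφm.const_mul _).add_const _).min measurable_const)
      rw [S.lintegral_invariance hinv hmeas]
      refine lintegral_mono fun x => ?_
      set c := (∑ j ∈ Finset.range n, A^j) * C with hc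
      calc ∑ e, ENNReal.ofReal (S.p e x) * min (A^n * φ (S.w e x) + c) M'
          ≤ min (∑ e, ENNReal.ofReal (S.p e x) * (A^n * φ (S.w e x) + c))
              (∑ e, ENNReal.ofReal (S.p e x) * M') :=
            le_min (Finset.sum_le_sum fun e _ => mul_le_mul_right (min_le_left _ _) _)
              (Finset.sum_le_sum fun e _ => mul_le_mul_right (min_le_right _ _) _)
        _ ≤ min (A^(n+1) * φ x + (∑ j ∈ Finset.range (n+1), A^j) * C) M' := by
            refine min_le_min ?_ ?_
            · have h2 : ∑ e, ENNReal.ofReal (S.p e x) * (A^n * φ (S.w e x) + c)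
                  = A^n * (∑ e, ENNReal.ofReal (S.p e x) * φ (S.w e x))
                    + (∑ e, ENNReal.ofReal (S.p e x)) * c := by
                rw [Finset.mul_sum, Finset.sum_mul, ← Finset.sum_add_distrib]
                refine Finset.sum_congr rfl fun e _ => by ring
              rw [h2, hqsum x, one_mul]
              calc A^n * (∑ e, ENNReal.ofReal (S.p e x) * φ (S.w e x)) + c
                  ≤ A^n * (A * φ x + C) + c := by
                    exact add_le_add (mul_le_mul_right (key x) _) le_rfl
                _ = A^(n+1) * φ x + (A^n * C + c) := by ring
                _ = A^(n+1) * φ x + (∑ j ∈ Finset.range (n+1), A^j) * C := by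
                    rw [hc, Finset.sum_range_succ, add_mul]
                    ring
            · rw [← Finset.sum_mul, hqsum x, one_mul]
  set cI : ℝ≥0∞ := (1 - A)⁻¹ * C with hcI
  have hcI_ne : cI ≠ ∞ := by
    refine ENNReal.mul_ne_top ?_ ENNReal.ofReal_ne_top
    rw [ENNReal.inv_ne_top]
    exact (tsub_pos_of_lt hA1).ne'
  have hrange_le : ∀ n : ℕ, (∑ j ∈ Finset.range n, A^j) * C ≤ cI := by
    intro n
    refine mul_le_mul_left ?_ C
    calc ∑ j ∈ Finset.range n, A^j ≤ ∑' j : ℕ, A^j := ENNReal.sum_le_tsum _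
      _ = (1 - A)⁻¹ := ENNReal.tsum_geometric A
  have bound1 : ∀ (M' : ℕ), ∫⁻ x, min (φ x) (M' : ℝ≥0∞) ∂μ ≤ cI := by
    intro M'
    have hlim : Tendsto (fun n => ∫⁻ x, min (A^n * φ x + cI) (M' : ℝ≥0∞) ∂μ) atTop
        (𝓝 (∫⁻ _x, min cI (M' : ℝ≥0∞) ∂μ)) := by
      refine tendsto_lintegral_of_dominated_convergence (fun _ => (M' : ℝ≥0∞))
        (fun n => ((hφm.const_mul _).add_const _).min measurable_const)
        (fun n => Filter.Eventually.of_forall fun x => min_le_right _ _) ?_ ?_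
      · rw [lintegral_const]
        exact ENNReal.mul_ne_top (ENNReal.natCast_ne_top M') (by simp)
      · refine Filter.Eventually.of_forall fun x => ?_
        have h3 : Tendsto (fun n => A^n * φ x) atTop (𝓝 0) := by
          have := ENNReal.Tendsto.mul_const
            (ENNReal.tendsto_pow_atTop_nhds_zero_of_lt_one hA1)
            (b := φ x) (Or.inr ENNReal.ofReal_ne_top)
          simpa using this
        have h4 : Tendsto (fun n => A^n * φ x + cI) atTop (𝓝 cI) := by
          simpa using h3.add (tendsto_const_nhds (x := cI))
        exact h4.min tendsto_const_nhds
    have step : ∀ n : ℕ, ∫⁻ x, min (φ x) (M' : ℝ≥0∞) ∂μ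
        ≤ ∫⁻ x, min (A^n * φ x + cI) (M' : ℝ≥0∞) ∂μ := by
      intro n
      refine (iter n (M' : ℝ≥0∞)).trans (lintegral_mono fun x => ?_)
      exact min_le_min (add_le_add le_rfl (hrange_le n)) le_rfl
    have hle : ∫⁻ x, min (φ x) (M' : ℝ≥0∞) ∂μ ≤ ∫⁻ _x, min cI (M' : ℝ≥0∞) ∂μ :=
      ge_of_tendsto' hlim step
    calc ∫⁻ x, min (φ x) (M' : ℝ≥0∞) ∂μ ≤ ∫⁻ _x, min cI (M' : ℝ≥0∞) ∂μ := hle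
      _ = min cI (M' : ℝ≥0∞) := by rw [lintegral_const, measure_univ, mul_one]
      _ ≤ cI := min_le_left _ _
  have hsup : ∫⁻ x, φ x ∂μ = ⨆ M' : ℕ, ∫⁻ x, min (φ x) (M' : ℝ≥0∞) ∂μ := by
    rw [← lintegral_iSup (fun n => hφm.min measurable_const)]
    · refine lintegral_congr fun x => ?_
      refine le_antisymm ?_ (iSup_le fun n => min_le_left _ _)
      obtain ⟨n, hn⟩ := ENNReal.exists_nat_gt (ENNReal.ofReal_ne_top (r := S.gfun xs x))
      refine le_iSup_of_le n ?_
      rw [min_eq_left hn.le]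
    · intro m n hmn x
      exact min_le_min le_rfl (Nat.cast_le.mpr hmn)
  rw [hsup]
  exact ne_top_of_le_ne_top hcI_ne (iSup_le bound1)

lemma integrable_gfun [OpensMeasurableSpace K] (S : CMS K N E) (xs : Fin N → K) (hxs : ∀ i, xs i ∈ S.Ks i)
    {μ : Measure K} [IsProbabilityMeasure μ] (hinv : S.adjoint μ = μ) :
    Integrable (S.gfun xs) μ := by
  refine ⟨(S.measurable_gfun xs).aestronglyMeasurable, ?_⟩
  rw [hasFiniteIntegral_iff_norm]
  have h1 : ∀ x, ENNReal.ofReal ‖S.gfun xs x‖ = ENNReal.ofReal (S.gfun xs x) := fun x => by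
    rw [Real.norm_of_nonneg (S.gfun_nonneg xs x)]
  rw [lintegral_congr h1]
  exact (S.moment xs hxs hinv).lt_top

end CMS

namespace CMS

variable {K : Type*} [MetricSpace K] [MeasurableSpace K]
  {N : ℕ} {E : Type*} [Fintype E]

lemma integrable_cylWeight (S : CMS K N E) (es : List E)
    {μ : Measure K} [IsFiniteMeasure μ] :
    Integrable (fun x => S.cylWeight x es) μ := by
  refine (integrable_const (1:ℝ)).mono' (S.measurable_cylWeight es).aestronglyMeasurable ?_
  refine Filter.Eventually.of_forall fun x => ?_
  rw [Real.norm_of_nonneg (S.cylWeight_nonneg es x)]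
  exact S.cylWeight_le_one es x

lemma integrable_total (S : CMS K N E) (xs : Fin N → K) (m : ℕ)
    {μ : Measure K} [IsFiniteMeasure μ] :
    Integrable (S.total xs m) μ := by
  unfold total
  exact integrable_finset_sum _ fun es _ => (S.integrable_cylWeight _).const_mul _

lemma sum_integral_eq (S : CMS K N E) (xs : Fin N → K) (m : ℕ)
    {μ : Measure K} [IsFiniteMeasure μ] :
    ∑ es : Fin (m+2) → E, S.dval xs m es * ∫ x, S.cylWeight x (List.ofFn es) ∂μ
      = ∫ x, S.total xs m x ∂μ := by
  unfold total
  rw [integral_finset_sum _ (fun es _ => (S.integrable_cylWeight _).const_mul _)]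
  exact Finset.sum_congr rfl fun es _ => (MeasureTheory.integral_const_mul _ _).symm

lemma integral_total_le [OpensMeasurableSpace K] (S : CMS K N E) (xs : Fin N → K)
    (hxs : ∀ i, xs i ∈ S.Ks i) {μ : Measure K} [IsProbabilityMeasure μ]
    (hinv : S.adjoint μ = μ) (m : ℕ) :
    ∫ x, S.total xs m x ∂μ
      ≤ S.a ^ (m+1) * (2 * S.a * (∫ x, S.gfun xs x ∂μ) + S.c0 xs) := by
  have hg := S.integrable_gfun xs hxs hinv
  have hrhs : Integrable (fun x => S.a ^ (m+1) * (2 * S.a * S.gfun xs x + S.c0 xs)) μ :=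
    (((hg.const_mul (2 * S.a)).add (integrable_const _)).const_mul _)
  refine (integral_mono (S.integrable_total xs m) hrhs
    (fun x => S.total_le xs hxs m x)).trans ?_
  rw [MeasureTheory.integral_const_mul,
    integral_add (hg.const_mul (2 * S.a)) (integrable_const _),
    MeasureTheory.integral_const_mul, integral_const]
  simp

end CMS

/-- In a "proper-like" space, a sequence with eventually geometrically decaying steps
converges. -/
lemma exists_tendsto_of_dist_le {K : Type*} [MetricSpace K]
    (hProper : ∀ A : Set K, Bornology.IsBounded A → IsCompact (closure A))
    {f : ℕ → K} {b : ℝ} (hb0 : 0 ≤ b) (hb1 : b < 1) (n0 : ℕ)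
    (h : ∀ m, n0 ≤ m → dist (f m) (f (m+1)) ≤ b ^ m) :
    ∃ L, Filter.Tendsto f Filter.atTop (nhds L) := by
  have hsum : Summable (fun m => dist (f m) (f (m+1))) := by
    rw [← summable_nat_add_iff n0]
    have hs2 : Summable (fun m : ℕ => b ^ (m + n0)) := by
      simp only [pow_add]
      exact (summable_geometric_of_lt_one hb0 hb1).mul_right _
    exact Summable.of_nonneg_of_le (fun m => dist_nonneg)
      (fun m => h (m + n0) (Nat.le_add_left n0 m)) hs2
  have hc : CauchySeq f := cauchySeq_of_summable_dist hsum
  obtain ⟨R, _hR, hRb⟩ := cauchySeq_bdd hc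
  have hbd : Bornology.IsBounded (Set.range f) := by
    rw [Metric.isBounded_range_iff]
    exact ⟨R, fun m n => (hRb m n).le⟩
  obtain ⟨L, _, φ, hφ, hL⟩ := (hProper _ hbd).tendsto_subseq
    (fun n => subset_closure (Set.mem_range_self n))
  exact ⟨L, tendsto_nhds_of_cauchySeq_of_subseq hc hφ.tendsto_atTop hL⟩

/-- Transfer of cylinder-membership between the `List.ofFn` form and the tuple form. -/
lemma cyl_mem_iff {E : Type*} {n : ℕ} (esf : Fin n → E) (m0 : ℤ) (σ : ℤ → E) :
    (∀ i : Fin (List.ofFn esf).length, σ (m0 + (i : ℕ)) = (List.ofFn esf).get i)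
      ↔ (∀ j : Fin n, σ (m0 + (j : ℕ)) = esf j) := by
  constructor
  · intro h j
    have := h (Fin.cast (List.length_ofFn (f := esf)).symm j)
    rw [List.get_ofFn] at this
    simpa using this
  · intro h i
    rw [List.get_ofFn]
    have := h (Fin.cast (List.length_ofFn (f := esf)) i)
    simpa using this

namespace CMS

variable {K : Type*} [MetricSpace K] [MeasurableSpace K]
  {N : ℕ} {E : Type*} [Fintype E]

open Classical in
/-- The "bad" event at scale `m`, shifted by `k`. -/
noncomputable def badCyl (S : CMS K N E) (xs : Fin N → K) (b : ℝ) (k : ℤ) (m : ℕ) :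
    Set (ℤ → E) :=
  ⋃ es ∈ Finset.univ.filter (fun es : Fin (m+2) → E => b ^ m < S.dval xs m es),
    {σ : ℤ → E | ∀ i : Fin (List.ofFn es).length,
      σ ((-((m:ℤ)+1) - k) + (i : ℕ)) = (List.ofFn es).get i}

lemma mem_badCyl (S : CMS K N E) (xs : Fin N → K) (b : ℝ) (k : ℤ) (m : ℕ) (σ : ℤ → E)
    (h : b ^ m < dist (S.codeSeq xs (shiftZ E (-k) σ) m) (S.codeSeq xs (shiftZ E (-k) σ) (m+1))) :
    σ ∈ S.badCyl xs b k m := by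
  classical
  set esf : Fin (m+2) → E := fun j => σ ((-((m:ℤ)+1) - k) + (j : ℕ)) with hesf
  have heq := S.dist_codeSeq_eq xs k m σ esf (fun j => rfl)
  rw [heq] at h
  refine Set.mem_iUnion₂.mpr ⟨esf, ?_, ?_⟩
  · simp only [Finset.mem_filter, Finset.mem_univ, true_and]
    convert h
  · exact (cyl_mem_iff esf _ σ).mpr (fun j => rfl)

end CMS

-- stmt 8
theorem cms_Y_full_measure
    {K : Type*} [MetricSpace K] [MeasurableSpace K] [BorelSpace K]
    {N : ℕ} {E : Type*} [Fintype E] [MeasurableSpace E] (S : CMS K N E)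
    (hProper : ∀ A : Set K, Bornology.IsBounded A → IsCompact (closure A))
    (hOpen : ∀ i, IsOpen (S.Ks i))
    (hUC : ∀ e, UniformContinuousOn (S.p e) (S.Ks (S.ι e)))
    (δ : ℝ) (hδ : 0 < δ) (hp : ∀ e, ∀ x ∈ S.Ks (S.ι e), δ ≤ S.p e x)
    (μ : Measure K) (hμ : IsProbabilityMeasure μ) (hinv : S.adjoint μ = μ)
    (M : Measure (ℤ → E)) (hM : S.IsGMarkovMeasure μ M)
    (xs : Fin N → K) (hxs : ∀ i, xs i ∈ S.Ks i)
    (hDini : ∀ e, DiniOn (S.p e) (S.Ks (S.ι e))) :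
    M (S.Yset xs) = 1 := by
  classical
  haveI hMP : IsProbabilityMeasure M := hM.1
  haveI : IsProbabilityMeasure μ := hμ
  -- constants
  have ha0 := S.a_pos
  have ha1 := S.a_lt_one
  obtain ⟨b, hb0, hab, hb1⟩ : ∃ b : ℝ, 0 < b ∧ S.a < b ∧ b < 1 :=
    ⟨(S.a + 1) / 2, by linarith, by linarith, by linarith⟩
  set r : ℝ := S.a / b with hrdef
  have hr0 : 0 ≤ r := div_nonneg ha0.le hb0.le
  have hr1 : r < 1 := (div_lt_one hb0).mpr hab
  set Ig : ℝ := ∫ x, S.gfun xs x ∂μ with hIgdef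
  have hIg0 : 0 ≤ Ig := integral_nonneg fun x => S.gfun_nonneg xs x
  set Q : ℝ := S.a * (2 * S.a * Ig + S.c0 xs) with hQdef
  have hQ0 : 0 ≤ Q := by
    have := S.c0_nonneg xs
    apply mul_nonneg ha0.le
    nlinarith
  -- the graph-violation set
  set NG : Set (ℤ → E) := ⋃ (j : ℤ), ⋃ (q : E × E), ⋃ (_ : S.τ q.1 ≠ S.ι q.2),
    {σ : ℤ → E | ∀ i : Fin (List.length [q.1, q.2]),
      σ (j + (i : ℕ)) = [q.1, q.2].get i} with hNGdef
  have hNG0 : M NG = 0 := by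
    refine measure_iUnion_null fun j =>
      measure_iUnion_null fun q => measure_iUnion_null fun hq => ?_
    rw [hM.2 j [q.1, q.2]]
    have hz : ∀ x : K, S.cylWeight x [q.1, q.2] = 0 := by
      intro x
      rcases eq_or_ne (S.p q.1 x) 0 with h | h
      · simp [h]
      · have hx := S.mem_of_p_ne h
        have hw : S.w q.1 x ∈ S.Ks (S.τ q.1) := S.w_maps q.1 hx
        have hnm : S.w q.1 x ∉ S.Ks (S.ι q.2) := fun hmem => hq (S.comp_unique hw hmem)
        simp [S.p_zero q.2 _ hnm]
    simp [hz]
  -- measure bound for the bad events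
  have hBad : ∀ (k : ℤ) (m : ℕ),
      M (S.badCyl xs b k m) ≤ ENNReal.ofReal (Q * r ^ m) := by
    intro k m
    unfold CMS.badCyl
    refine (measure_biUnion_finset_le _ _).trans ?_
    have hstep : ∀ es ∈ Finset.univ.filter (fun es : Fin (m+2) → E => b ^ m < S.dval xs m es),
        M {σ : ℤ → E | ∀ i : Fin (List.ofFn es).length,
            σ ((-((m:ℤ)+1) - k) + (i : ℕ)) = (List.ofFn es).get i}
          ≤ ENNReal.ofReal
              ((1 / b ^ m) * (S.dval xs m es * ∫ x, S.cylWeight x (List.ofFn es) ∂μ)) := by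
      intro es hes
      rw [hM.2 (-((m:ℤ)+1) - k) (List.ofFn es)]
      refine ENNReal.ofReal_le_ofReal ?_
      have hI0 : 0 ≤ ∫ x, S.cylWeight x (List.ofFn es) ∂μ :=
        integral_nonneg fun x => S.cylWeight_nonneg _ x
      have hd : b ^ m < S.dval xs m es := (Finset.mem_filter.mp hes).2
      have hbm : 0 < b ^ m := pow_pos hb0 m
      have h2 : b ^ m * ∫ x, S.cylWeight x (List.ofFn es) ∂μ
          ≤ S.dval xs m es * ∫ x, S.cylWeight x (List.ofFn es) ∂μ :=
        mul_le_mul_of_nonneg_right hd.le hI0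
      calc ∫ x, S.cylWeight x (List.ofFn es) ∂μ
          = (1 / b ^ m) * (b ^ m * ∫ x, S.cylWeight x (List.ofFn es) ∂μ) := by
            field_simp
        _ ≤ (1 / b ^ m) * (S.dval xs m es * ∫ x, S.cylWeight x (List.ofFn es) ∂μ) :=
            mul_le_mul_of_nonneg_left h2 (by positivity)
    refine (Finset.sum_le_sum hstep).trans ?_
    rw [← ENNReal.ofReal_sum_of_nonneg (fun es _ => mul_nonneg (by positivity)
      (mul_nonneg (S.dval_nonneg xs m es) (integral_nonneg fun x => S.cylWeight_nonneg _ x)))]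
    refine ENNReal.ofReal_le_ofReal ?_
    rw [← Finset.mul_sum]
    have hsum_le : ∑ es ∈ Finset.univ.filter (fun es : Fin (m+2) → E => b ^ m < S.dval xs m es),
        S.dval xs m es * ∫ x, S.cylWeight x (List.ofFn es) ∂μ
          ≤ ∑ es : Fin (m+2) → E, S.dval xs m es * ∫ x, S.cylWeight x (List.ofFn es) ∂μ :=
      Finset.sum_le_sum_of_subset_of_nonneg (Finset.filter_subset _ _)
        (fun es _ _ => mul_nonneg (S.dval_nonneg xs m es)
          (integral_nonneg fun x => S.cylWeight_nonneg _ x))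
    refine le_trans (mul_le_mul_of_nonneg_left hsum_le (by positivity)) ?_
    rw [S.sum_integral_eq xs m]
    refine le_trans (mul_le_mul_of_nonneg_left (S.integral_total_le xs hxs hinv m)
      (by positivity)) ?_
    refine le_of_eq ?_
    rw [hQdef, hrdef, div_pow]
    have hbm : (b:ℝ) ^ m ≠ 0 := (pow_pos hb0 m).ne'
    field_simp
    ring
  -- the per-shift complement has measure zero
  have hDk : ∀ k : ℤ, M ((shiftZ E k '' S.Dset xs)ᶜ) = 0 := by
    intro k
    -- tail bound
    have hUn : ∀ n : ℕ, M (⋃ m : ℕ, ⋃ (_ : n ≤ m), S.badCyl xs b k m)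
        ≤ ENNReal.ofReal (Q * r ^ n) * (1 - ENNReal.ofReal r)⁻¹ := by
      intro n
      have hsub : (⋃ m : ℕ, ⋃ (_ : n ≤ m), S.badCyl xs b k m)
          ⊆ ⋃ j : ℕ, S.badCyl xs b k (n + j) := by
        intro σ hσ
        simp only [Set.mem_iUnion] at hσ ⊢
        obtain ⟨m, hm, hmem⟩ := hσ
        refine ⟨m - n, ?_⟩
        have hnm : n + (m - n) = m := by omega
        rw [hnm]
        exact hmem
      refine (measure_mono hsub).trans ((measure_iUnion_le _).trans ?_)
      have hterm : ∀ j : ℕ, M (S.badCyl xs b k (n + j))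
          ≤ ENNReal.ofReal (Q * r ^ n) * (ENNReal.ofReal r) ^ j := by
        intro j
        refine (hBad k (n + j)).trans (le_of_eq ?_)
        rw [pow_add, show Q * (r ^ n * r ^ j) = (Q * r ^ n) * r ^ j by ring]
        rw [ENNReal.ofReal_mul (by positivity), ENNReal.ofReal_pow hr0]
      refine (ENNReal.tsum_le_tsum hterm).trans (le_of_eq ?_)
      rw [ENNReal.tsum_mul_left, ENNReal.tsum_geometric]
    -- inclusion
    have hincl : ∀ n : ℕ, (shiftZ E k '' S.Dset xs)ᶜ
        ⊆ NG ∪ (⋃ m : ℕ, ⋃ (_ : n ≤ m), S.badCyl xs b k m) := by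
      intro n σ hσ
      by_contra hcon
      rw [Set.mem_union] at hcon
      push_neg at hcon
      obtain ⟨hnNG, hnB⟩ := hcon
      apply hσ
      set σ' : ℤ → E := shiftZ E (-k) σ with hσ'def
      have hσ'eq : ∀ t : ℤ, σ' t = σ (t + -k) := fun t => rfl
      -- σ' is a path of the graph
      have hG : σ' ∈ S.SigmaG := by
        by_contra hg
        apply hnNG
        rw [CMS.SigmaG, Set.mem_setOf_eq] at hg
        push_neg at hg
        obtain ⟨j, hj⟩ := hg
        rw [hNGdef]
        refine Set.mem_iUnion.mpr ⟨j + -k, ?_⟩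
        refine Set.mem_iUnion.mpr ⟨(σ' j, σ' (j + 1)), ?_⟩
        refine Set.mem_iUnion.mpr ⟨hj, ?_⟩
        rw [Set.mem_setOf_eq]
        intro i
        fin_cases i
        · show σ (j + -k + ((0:ℕ):ℤ)) = σ' j
          rw [hσ'eq]
          norm_num
        · show σ (j + -k + ((1:ℕ):ℤ)) = σ' (j + 1)
          rw [hσ'eq]
          congr 1
          push_cast
          ring
      -- eventually small steps
      have hgood : ∀ m, n ≤ m →
          dist (S.codeSeq xs σ' m) (S.codeSeq xs σ' (m+1)) ≤ b ^ m := by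
        intro m hm
        by_contra hlt
        push_neg at hlt
        apply hnB
        refine Set.mem_iUnion.mpr ⟨m, Set.mem_iUnion.mpr ⟨hm, ?_⟩⟩
        exact S.mem_badCyl xs b k m σ hlt
      obtain ⟨L, hL⟩ := exists_tendsto_of_dist_le hProper hb0.le hb1 n hgood
      refine ⟨σ', ⟨hG, L, hL⟩, ?_⟩
      funext j
      show σ (j + k + -k) = σ j
      congr 1
      ring
    -- conclude
    have hle : ∀ n : ℕ, M ((shiftZ E k '' S.Dset xs)ᶜ)
        ≤ ENNReal.ofReal (Q * r ^ n) * (1 - ENNReal.ofReal r)⁻¹ := by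
      intro n
      calc M ((shiftZ E k '' S.Dset xs)ᶜ)
          ≤ M (NG ∪ (⋃ m : ℕ, ⋃ (_ : n ≤ m), S.badCyl xs b k m)) :=
            measure_mono (hincl n)
        _ ≤ M NG + M (⋃ m : ℕ, ⋃ (_ : n ≤ m), S.badCyl xs b k m) := measure_union_le _ _
        _ ≤ 0 + ENNReal.ofReal (Q * r ^ n) * (1 - ENNReal.ofReal r)⁻¹ := by
            rw [hNG0]
            exact add_le_add le_rfl (hUn n)
        _ = ENNReal.ofReal (Q * r ^ n) * (1 - ENNReal.ofReal r)⁻¹ := zero_add _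
    have htend : Tendsto (fun n : ℕ => ENNReal.ofReal (Q * r ^ n) * (1 - ENNReal.ofReal r)⁻¹)
        atTop (𝓝 0) := by
      have h1 : Tendsto (fun n : ℕ => Q * r ^ n) atTop (𝓝 0) := by
        have := (tendsto_pow_atTop_nhds_zero_of_lt_one hr0 hr1).const_mul Q
        simpa using this
      have h2 : Tendsto (fun n : ℕ => ENNReal.ofReal (Q * r ^ n)) atTop (𝓝 0) := by
        have := ENNReal.tendsto_ofReal h1
        simpa using this
      have hne : (1 - ENNReal.ofReal r)⁻¹ ≠ ⊤ := by
        rw [ENNReal.inv_ne_top]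
        exact (tsub_pos_of_lt (ENNReal.ofReal_lt_one.mpr hr1)).ne'
      have := ENNReal.Tendsto.mul_const h2 (Or.inr hne)
      simpa using this
    have := ge_of_tendsto' htend hle
    exact le_antisymm this zero_le
  -- conclude full measure for Y
  have hYc : M ((S.Yset xs)ᶜ) = 0 := by
    rw [show (S.Yset xs)ᶜ = ⋃ n : ℤ, (shiftZ E n '' S.Dset xs)ᶜ by
      rw [CMS.Yset, Set.compl_iInter]]
    exact measure_iUnion_null hDk
  refine le_antisymm prob_le_one ?_
  calc (1:ℝ≥0∞) = M Set.univ := measure_univ.symm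
    _ = M (S.Yset xs ∪ (S.Yset xs)ᶜ) := by rw [Set.union_compl_self]
    _ ≤ M (S.Yset xs) + M ((S.Yset xs)ᶜ) := measure_union_le _ _
    _ = M (S.Yset xs) := by rw [hYc, add_zero]
end

section
/- Let (K_{i(e)}, w_e, p_e)_{e∈E} be a contractive Markov system with average contracting rate a ∈ (0,1) on a metric space in which every set of finite diameter is relatively compact, with K_1,…,K_N nonempty open sets, each p_e|_{K_{i(e)}} Dini-continuous and bounded below by some δ > 0. If the system has an invariant Borel probability measure μ with μ(K_{i(e)}) > 0 for all e ∈ E, then the set Y := ⋂_{n∈ℤ} S^n(D) is dense in Σ_G. -/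
open MeasureTheory Filter Topology
open scoped ENNReal

-- ===================== Auxiliary development =====================

set_option linter.unusedSectionVars false
set_option linter.unnecessarySimpa false

namespace CMSDense

open MeasureTheory Filter Topology
open scoped ENNReal

variable {K : Type*} [MetricSpace K] [MeasurableSpace K]
  {N : ℕ} {E : Type*} [Fintype E] [DecidableEq E]
  (S : CMS K N E)

/-- apply the maps of a list of edges, first element first -/
def apl : List E → K → K
  | [], x => x
  | e :: l, x => apl l (S.w e x)

@[simp] lemma apl_nil (x : K) : apl S [] x = x := rfl

@[simp] lemma apl_cons (e : E) (l : List E) (x : K) :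
    apl S (e :: l) x = apl S l (S.w e x) := rfl

lemma apl_append (l₁ l₂ : List E) (x : K) :
    apl S (l₁ ++ l₂) x = apl S l₂ (apl S l₁ x) := by
  induction l₁ generalizing x with
  | nil => rfl
  | cons e l ih => simp [ih]

@[simp] lemma cylW_nil (x : K) : S.cylWeight x [] = 1 := rfl

@[simp] lemma cylW_cons (e : E) (l : List E) (x : K) :
    S.cylWeight x (e :: l) = S.p e x * S.cylWeight (S.w e x) l := rfl

lemma cylW_nonneg (l : List E) (x : K) : 0 ≤ S.cylWeight x l := by
  induction l generalizing x with
  | nil => norm_num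
  | cons e l ih => exact mul_nonneg (S.p_nonneg e x) (ih _)

lemma p_le_one (e : E) (x : K) : S.p e x ≤ 1 := by
  calc S.p e x ≤ ∑ e', S.p e' x :=
        Finset.single_le_sum (fun e' _ => S.p_nonneg e' x) (Finset.mem_univ e)
    _ = 1 := S.p_sum_one x

lemma cylW_le_one (l : List E) (x : K) : S.cylWeight x l ≤ 1 := by
  induction l generalizing x with
  | nil => norm_num
  | cons e l ih =>
      calc S.p e x * S.cylWeight (S.w e x) l ≤ 1 * 1 :=
            mul_le_mul (p_le_one S e x) (ih _) (cylW_nonneg S _ _) one_pos.le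
        _ = 1 := one_mul 1

lemma cylW_append (l₁ l₂ : List E) (x : K) :
    S.cylWeight x (l₁ ++ l₂) = S.cylWeight x l₁ * S.cylWeight (apl S l₁ x) l₂ := by
  induction l₁ generalizing x with
  | nil => simp
  | cons e l ih => simp [ih, mul_assoc]

lemma cylW_meas (l : List E) : Measurable (fun x => S.cylWeight x l) := by
  induction l with
  | nil => simpa using measurable_const
  | cons e l ih => exact (S.p_meas e).mul (ih.comp (S.w_meas e))

/-- the finset of all words of length `k` -/
def words : ℕ → Finset (List E)
  | 0 => {[]}
  | k+1 => (Finset.univ ×ˢ words k).image fun q => q.1 :: q.2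

lemma sum_words_succ {M : Type*} [AddCommMonoid M] (k : ℕ) (f : List E → M) :
    ∑ l ∈ words (E := E) (k+1), f l = ∑ e : E, ∑ l ∈ words (E := E) k, f (e :: l) := by
  rw [words, Finset.sum_image ?inj, Finset.sum_product]
  intro q hq q' hq' h
  cases q; cases q'; simpa using h

lemma mem_words {k : ℕ} {l : List E} : l ∈ words (E := E) k ↔ l.length = k := by
  induction k generalizing l with
  | zero => simp [words, List.length_eq_zero_iff]
  | succ k ih =>
      constructor
      · intro h
        simp only [words, Finset.mem_image, Finset.mem_product] at h
        obtain ⟨⟨e, l'⟩, ⟨-, hl'⟩, rfl⟩ := h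
        simp [ih.1 hl']
      · intro h
        cases l with
        | nil => simp at h
        | cons e l' =>
            simp only [words, Finset.mem_image, Finset.mem_product]
            exact ⟨(e, l'), ⟨Finset.mem_univ _, ih.2 (by simpa using h)⟩, rfl⟩

lemma sum_words_append {M : Type*} [AddCommMonoid M] (k₁ k₂ : ℕ) (f : List E → M) :
    ∑ l ∈ words (E := E) (k₁ + k₂), f l
      = ∑ l₁ ∈ words (E := E) k₁, ∑ l₂ ∈ words (E := E) k₂, f (l₁ ++ l₂) := by
  induction k₁ generalizing f with
  | zero => simp [words]
  | succ k ih =>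
      rw [Nat.succ_add, sum_words_succ, sum_words_succ]
      refine Finset.sum_congr rfl fun e _ => ?_
      rw [ih (fun l => f (e :: l))]
      simp

lemma sum_cylW (k : ℕ) (x : K) : ∑ l ∈ words (E := E) k, S.cylWeight x l = 1 := by
  induction k generalizing x with
  | zero => simp [words]
  | succ k ih =>
      rw [sum_words_succ]
      simp only [cylW_cons]
      rw [show ∀ f : E → ℝ, ∑ e, f e = ∑ e, f e from fun _ => rfl]
      calc ∑ e : E, ∑ l ∈ words (E := E) k, S.p e x * S.cylWeight (S.w e x) l
          = ∑ e : E, S.p e x * ∑ l ∈ words (E := E) k, S.cylWeight (S.w e x) l := by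
            simp [Finset.mul_sum]
        _ = ∑ e : E, S.p e x := by simp [ih]
        _ = 1 := S.p_sum_one x


-- ===== chunk 2 =====
section Chunk2
variable {K : Type*} [MetricSpace K] [MeasurableSpace K]
  {N : ℕ} {E : Type*} [Fintype E] [DecidableEq E]
  (S : CMS K N E)

/-- the list of letters `ζ s, ζ (s+1), …, ζ (s+k-1)` -/
def listOf (ζ : ℤ → E) : ℤ → ℕ → List E
  | _, 0 => []
  | s, k+1 => ζ s :: listOf ζ (s+1) k

@[simp] lemma listOf_zero (ζ : ℤ → E) (s : ℤ) : listOf ζ s 0 = [] := rfl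

@[simp] lemma listOf_succ (ζ : ℤ → E) (s : ℤ) (k : ℕ) :
    listOf ζ s (k+1) = ζ s :: listOf ζ (s+1) k := rfl

@[simp] lemma listOf_length (ζ : ℤ → E) (s : ℤ) (k : ℕ) : (listOf ζ s k).length = k := by
  induction k generalizing s with
  | zero => rfl
  | succ k ih => simp [ih]

lemma listOf_congr {ζ ζ' : ℤ → E} {s : ℤ} {k : ℕ}
    (h : ∀ i : ℤ, s ≤ i → i < s + k → ζ i = ζ' i) : listOf ζ s k = listOf ζ' s k := by
  induction k generalizing s with
  | zero => rfl
  | succ k ih =>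
      simp only [listOf_succ]
      rw [h s le_rfl (by omega), ih fun i h1 h2 => h i (by omega) (by omega)]

lemma listOf_shift (ζ : ℤ → E) (b s : ℤ) (k : ℕ) :
    listOf (shiftZ E b ζ) s k = listOf ζ (s + b) k := by
  induction k generalizing s with
  | zero => rfl
  | succ k ih =>
      simp only [listOf_succ, ih]
      rw [show s + 1 + b = s + b + 1 by ring]
      rfl

lemma listOf_getD (ζ : ℤ → E) (e₀ : E) (s : ℤ) (k : ℕ) (i : ℕ) (hi : i < k) :
    (listOf ζ s k).getD i e₀ = ζ (s + i) := by
  induction k generalizing s i with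
  | zero => omega
  | succ k ih =>
      cases i with
      | zero => simp
      | succ i =>
          simp only [listOf_succ, List.getD_cons_succ]
          rw [ih _ _ (by omega)]
          congr 1
          omega

/-- the distance increment associated to a word (first letter = innermost new map) -/
noncomputable def dW (xs : Fin N → K) : List E → ℝ
  | e' :: e₁ :: t => dist (apl S (e₁ :: t) (xs (S.ι e₁))) (apl S (e₁ :: t) (S.w e' (xs (S.ι e'))))
  | _ => 0

lemma dW_nonneg (xs : Fin N → K) (l : List E) : 0 ≤ dW S xs l := by
  match l with
  | [] => exact le_rfl
  | [e] => exact le_rfl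
  | e' :: e₁ :: t => exact dist_nonneg

/-- distance to the anchor point of one's own part -/
noncomputable def phi (xs : Fin N → K) : K → ℝ :=
  fun x => ∑ i, (S.Ks i).indicator (fun y => dist y (xs i)) x

lemma phi_nonneg (xs : Fin N → K) (x : K) : 0 ≤ phi S xs x :=
  Finset.sum_nonneg fun i _ => Set.indicator_nonneg (fun y _ => dist_nonneg) x

lemma phi_meas [BorelSpace K] (xs : Fin N → K) : Measurable (phi S xs) :=
  Finset.measurable_sum _ fun i _ =>
    ((continuous_id.dist continuous_const).measurable).indicator (S.Ks_meas i)

lemma exists_mem_Ks (x : K) : ∃ i, x ∈ S.Ks i := by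
  have : x ∈ ⋃ i, S.Ks i := by rw [S.Ks_cover]; trivial
  simpa using this

lemma phi_eq (xs : Fin N → K) {x : K} {i : Fin N} (hx : x ∈ S.Ks i) :
    phi S xs x = dist x (xs i) := by
  rw [phi, Finset.sum_eq_single i]
  · simp [Set.indicator_of_mem hx]
  · intro j _ hj
    rw [Set.indicator_of_notMem]
    intro hxj
    exact (S.Ks_disj j i hj).ne_of_mem hxj hx rfl
  · simp

/-- the constant `C`: sum of distances between images of anchors and anchors -/
noncomputable def Cc (xs : Fin N → K) : ℝ := ∑ e, dist (S.w e (xs (S.ι e))) (xs (S.τ e))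

lemma Cc_nonneg (xs : Fin N → K) : 0 ≤ Cc S xs :=
  Finset.sum_nonneg fun e _ => dist_nonneg

lemma dist_le_Cc (xs : Fin N → K) (e : E) :
    dist (S.w e (xs (S.ι e))) (xs (S.τ e)) ≤ Cc S xs :=
  Finset.single_le_sum (f := fun e' => dist (S.w e' (xs (S.ι e'))) (xs (S.τ e')))
    (fun e' _ => dist_nonneg) (Finset.mem_univ e)

/-- the transfer operator -/
noncomputable def Top (F : K → ℝ≥0∞) : K → ℝ≥0∞ :=
  fun x => ∑ e, ENNReal.ofReal (S.p e x) * F (S.w e x)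

lemma Top_meas {F : K → ℝ≥0∞} (hF : Measurable F) : Measurable (Top S F) :=
  Finset.measurable_sum _ fun e _ =>
    ((ENNReal.measurable_ofReal.comp (S.p_meas e)).mul (hF.comp (S.w_meas e)))

lemma Top_iterate_meas {F : K → ℝ≥0∞} (hF : Measurable F) (k : ℕ) :
    Measurable ((Top S)^[k] F) := by
  induction k with
  | zero => exact hF
  | succ k ih => rw [Function.iterate_succ_apply']; exact Top_meas S ih

end Chunk2


-- ===== chunk 3 =====
section Chunk3
variable {K : Type*} [MetricSpace K] [MeasurableSpace K] [BorelSpace K]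
  {N : ℕ} {E : Type*} [Fintype E] [DecidableEq E]
  (S : CMS K N E) (μ : Measure K)

lemma kernel_meas :
    Measurable (fun x => ∑ e, ENNReal.ofReal (S.p e x) • Measure.dirac (S.w e x)) := by
  apply Measure.measurable_of_measurable_coe
  intro s hs
  simp only [Measure.coe_finset_sum, Finset.sum_apply, Measure.smul_apply, smul_eq_mul]
  apply Finset.measurable_sum
  intro e _
  have h1 : Measurable fun x => (Measure.dirac (S.w e x)) s := by
    simp only [Measure.dirac_apply' _ hs]
    exact (measurable_one.indicator hs).comp (S.w_meas e)
  exact (ENNReal.measurable_ofReal.comp (S.p_meas e)).mul h1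

lemma lintegral_Top (hinv : S.adjoint μ = μ) {F : K → ℝ≥0∞} (hF : Measurable F) :
    ∫⁻ x, Top S F x ∂μ = ∫⁻ x, F x ∂μ := by
  conv_rhs => rw [← hinv]
  rw [CMS.adjoint, Measure.lintegral_bind (kernel_meas S).aemeasurable hF.aemeasurable]
  refine lintegral_congr fun x => ?_
  rw [lintegral_finset_sum_measure]
  refine Finset.sum_congr rfl fun e _ => ?_
  rw [lintegral_smul_measure, lintegral_dirac' _ hF, smul_eq_mul]

lemma lintegral_Top_iterate (hinv : S.adjoint μ = μ) {F : K → ℝ≥0∞} (hF : Measurable F) (k : ℕ) :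
    ∫⁻ x, (Top S)^[k] F x ∂μ = ∫⁻ x, F x ∂μ := by
  induction k with
  | zero => rfl
  | succ k ih =>
      rw [Function.iterate_succ_apply', lintegral_Top S μ hinv (Top_iterate_meas S hF k), ih]

lemma sum_cylW_mul (k : ℕ) (F : K → ℝ≥0∞) (x : K) :
    ∑ l ∈ words (E := E) k, ENNReal.ofReal (S.cylWeight x l) * F (apl S l x)
      = (Top S)^[k] F x := by
  induction k generalizing x with
  | zero => simp [words]
  | succ k ih =>
      rw [sum_words_succ, Function.iterate_succ_apply']
      refine Finset.sum_congr rfl fun e _ => ?_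
      simp only [cylW_cons, apl_cons]
      rw [← ih (S.w e x), Finset.mul_sum]
      refine Finset.sum_congr rfl fun l _ => ?_
      rw [ENNReal.ofReal_mul (S.p_nonneg e x), mul_assoc]

lemma Top_iterate_one (k : ℕ) (x : K) : (Top S)^[k] (fun _ => (1:ℝ≥0∞)) x = 1 := by
  induction k generalizing x with
  | zero => rfl
  | succ k ih =>
      rw [Function.iterate_succ_apply']
      simp only [Top, ih, mul_one]
      rw [← ENNReal.ofReal_sum_of_nonneg (fun e _ => S.p_nonneg e x), S.p_sum_one x]
      simp

lemma sum_ofReal_cylW (k : ℕ) (x : K) :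
    ∑ l ∈ words (E := E) k, ENNReal.ofReal (S.cylWeight x l) = 1 := by
  have := sum_cylW_mul S k (fun _ => 1) x
  simp only [mul_one] at this
  rw [this, Top_iterate_one]

/-- the first moment of an invariant measure is finite -/
lemma moment (hμ : IsProbabilityMeasure μ) (hinv : S.adjoint μ = μ) (xs : Fin N → K)
    (hxs : ∀ i, xs i ∈ S.Ks i) :
    ∫⁻ x, ENNReal.ofReal (phi S xs x) ∂μ ≤ ENNReal.ofReal (Cc S xs / (1 - S.a)) := by
  set f : K → ℝ≥0∞ := fun x => ENNReal.ofReal (phi S xs x) with hf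
  have hfm : Measurable f := ENNReal.measurable_ofReal.comp (phi_meas S xs)
  have key : ∀ n : ℕ, ∫⁻ x in {x | f x ≤ n}, f x ∂μ ≤ ENNReal.ofReal (Cc S xs / (1 - S.a)) := by
    intro n
    set A : Set K := {x | f x ≤ n} with hA
    have hAm : MeasurableSet A := hfm measurableSet_Iic
    set g : K → ℝ≥0∞ := fun x => min (f x) n with hg
    have hgm : Measurable g := hfm.min measurable_const
    have hTop : ∫⁻ x, g x ∂μ = ∫⁻ x, Top S g x ∂μ := (lintegral_Top S μ hinv hgm).symm
    -- pointwise bound for Top g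
    have hbound : ∀ x, Top S g x ≤
        A.indicator (fun y => ENNReal.ofReal S.a * f y + ENNReal.ofReal (Cc S xs)) x
          + Aᶜ.indicator (fun _ => (n:ℝ≥0∞)) x := by
      intro x
      by_cases hx : x ∈ A
      · rw [Set.indicator_of_mem hx, Set.indicator_of_notMem (by simpa using hx), add_zero]
        obtain ⟨i, hi⟩ := exists_mem_Ks S x
        have hstep : ∀ e : E, ENNReal.ofReal (S.p e x) * g (S.w e x)
            ≤ ENNReal.ofReal (S.p e x * (dist (S.w e x) (S.w e (xs i)) + Cc S xs)) := by
          intro e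
          by_cases hpe : S.p e x = 0
          · simp [hpe]
          · have hxK : x ∈ S.Ks (S.ι e) := by
              by_contra hxK
              exact hpe (S.p_zero e x hxK)
            have hιe : S.ι e = i := by
              by_contra hne
              exact (S.Ks_disj _ _ hne).ne_of_mem hxK hi rfl
            have hwx : S.w e x ∈ S.Ks (S.τ e) := S.w_maps e hxK
            have hphi : phi S xs (S.w e x) = dist (S.w e x) (xs (S.τ e)) := phi_eq S xs hwx
            have h1 : g (S.w e x) ≤ ENNReal.ofReal (dist (S.w e x) (S.w e (xs i)) + Cc S xs) := by
              refine le_trans (min_le_left _ _) ?_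
              rw [hf]
              apply ENNReal.ofReal_le_ofReal
              rw [hphi]
              have hd : dist (S.w e x) (xs (S.τ e))
                  ≤ dist (S.w e x) (S.w e (xs (S.ι e))) + Cc S xs :=
                le_trans (dist_triangle _ (S.w e (xs (S.ι e))) _)
                  (add_le_add le_rfl (dist_le_Cc S xs e))
              rwa [hιe] at hd
            calc ENNReal.ofReal (S.p e x) * g (S.w e x)
                ≤ ENNReal.ofReal (S.p e x) * ENNReal.ofReal (dist (S.w e x) (S.w e (xs i)) + Cc S xs) :=
                  mul_le_mul_right h1 _
              _ = ENNReal.ofReal (S.p e x * (dist (S.w e x) (S.w e (xs i)) + Cc S xs)) :=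
                  (ENNReal.ofReal_mul (S.p_nonneg e x)).symm
        calc Top S g x ≤ ∑ e, ENNReal.ofReal (S.p e x * (dist (S.w e x) (S.w e (xs i)) + Cc S xs)) :=
              Finset.sum_le_sum fun e _ => hstep e
          _ = ENNReal.ofReal (∑ e, S.p e x * (dist (S.w e x) (S.w e (xs i)) + Cc S xs)) :=
              (ENNReal.ofReal_sum_of_nonneg fun e _ => mul_nonneg (S.p_nonneg e x)
                (add_nonneg dist_nonneg (Cc_nonneg S xs))).symm
          _ ≤ ENNReal.ofReal (S.a * dist x (xs i) + Cc S xs) := by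
              apply ENNReal.ofReal_le_ofReal
              have expand : ∑ e, S.p e x * (dist (S.w e x) (S.w e (xs i)) + Cc S xs)
                  = (∑ e, S.p e x * dist (S.w e x) (S.w e (xs i))) + Cc S xs := by
                simp only [mul_add]
                rw [Finset.sum_add_distrib, ← Finset.sum_mul, S.p_sum_one x, one_mul]
              rw [expand]
              exact add_le_add (S.contractive i x hi (xs i) (hxs i)) le_rfl
          _ ≤ ENNReal.ofReal S.a * f x + ENNReal.ofReal (Cc S xs) := by
              rw [ENNReal.ofReal_add (mul_nonneg S.a_pos.le dist_nonneg) (Cc_nonneg S xs),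
                ENNReal.ofReal_mul S.a_pos.le]
              apply add_le_add _ le_rfl
              apply mul_le_mul_right
              rw [hf]
              apply ENNReal.ofReal_le_ofReal
              rw [phi_eq S xs hi]
      · rw [Set.indicator_of_notMem hx, Set.indicator_of_mem (by simpa using hx), zero_add]
        calc Top S g x ≤ ∑ e, ENNReal.ofReal (S.p e x) * n :=
              Finset.sum_le_sum fun e _ => mul_le_mul_right (min_le_right _ _) _
          _ = (n:ℝ≥0∞) := by
              rw [← Finset.sum_mul, ← ENNReal.ofReal_sum_of_nonneg (fun e _ => S.p_nonneg e x),
                S.p_sum_one x]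
              simp
    -- the decomposition of ∫ g
    have hgdec : ∫⁻ x, g x ∂μ = (∫⁻ x in A, f x ∂μ) + (n:ℝ≥0∞) * μ Aᶜ := by
      have : g = fun x => A.indicator f x + Aᶜ.indicator (fun _ => (n:ℝ≥0∞)) x := by
        funext x
        by_cases hx : x ∈ A
        · rw [Set.indicator_of_mem hx, Set.indicator_of_notMem (by simpa using hx), add_zero,
            hg]
          exact min_eq_left hx
        · rw [Set.indicator_of_notMem hx, Set.indicator_of_mem (by simpa using hx), zero_add,
            hg]
          exact min_eq_right (le_of_lt (lt_of_not_ge hx))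
      rw [this, lintegral_add_left (hfm.indicator hAm)]
      rw [lintegral_indicator hAm, lintegral_indicator hAm.compl]
      simp [mul_comm]
    have hupper : ∫⁻ x, Top S g x ∂μ
        ≤ (ENNReal.ofReal S.a * ∫⁻ x in A, f x ∂μ) + ENNReal.ofReal (Cc S xs)
            + (n:ℝ≥0∞) * μ Aᶜ := by
      calc ∫⁻ x, Top S g x ∂μ
          ≤ ∫⁻ x, (A.indicator (fun y => ENNReal.ofReal S.a * f y + ENNReal.ofReal (Cc S xs)) x
              + Aᶜ.indicator (fun _ => (n:ℝ≥0∞)) x) ∂μ := lintegral_mono hbound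
        _ = (∫⁻ x in A, (ENNReal.ofReal S.a * f x + ENNReal.ofReal (Cc S xs)) ∂μ)
              + (∫⁻ x in Aᶜ, (n:ℝ≥0∞) ∂μ) := by
            have hm1 : Measurable fun y => ENNReal.ofReal S.a * f y + ENNReal.ofReal (Cc S xs) :=
              (hfm.const_mul _).add measurable_const
            rw [lintegral_add_left (hm1.indicator hAm)]
            rw [lintegral_indicator hAm, lintegral_indicator hAm.compl]
        _ ≤ (ENNReal.ofReal S.a * ∫⁻ x in A, f x ∂μ) + ENNReal.ofReal (Cc S xs)
              + (n:ℝ≥0∞) * μ Aᶜ := by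
            rw [lintegral_add_right _ measurable_const, lintegral_const_mul _ hfm]
            simp only [lintegral_const, Measure.restrict_apply MeasurableSet.univ,
              Set.univ_inter]
            refine add_le_add (add_le_add le_rfl ?_) (by rw [mul_comm])
            calc ENNReal.ofReal (Cc S xs) * μ A ≤ ENNReal.ofReal (Cc S xs) * 1 := by
                  exact mul_le_mul_right prob_le_one _
              _ = _ := mul_one _
    -- combine
    have hXfin : ∫⁻ x in A, f x ∂μ ≤ (n:ℝ≥0∞) := by
      calc ∫⁻ x in A, f x ∂μ ≤ ∫⁻ _ in A, (n:ℝ≥0∞) ∂μ := by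
            apply setLIntegral_mono measurable_const
            intro x hx
            exact hx
        _ ≤ (n:ℝ≥0∞) * 1 := by
            simp only [lintegral_const, Measure.restrict_apply MeasurableSet.univ,
              Set.univ_inter]
            exact mul_le_mul_right prob_le_one _
        _ = n := mul_one _
    set X := ∫⁻ x in A, f x ∂μ with hX
    have hYfin : (n:ℝ≥0∞) * μ Aᶜ ≠ ⊤ :=
      ENNReal.mul_ne_top (ENNReal.natCast_ne_top n) (measure_ne_top μ _)
    have hmain : X ≤ ENNReal.ofReal S.a * X + ENNReal.ofReal (Cc S xs) := by
      have h3 : X + (n:ℝ≥0∞) * μ Aᶜ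
          ≤ ENNReal.ofReal S.a * X + ENNReal.ofReal (Cc S xs) + (n:ℝ≥0∞) * μ Aᶜ := by
        rw [← hgdec, hTop]
        exact hupper
      exact (ENNReal.add_le_add_iff_right hYfin).1 h3
    -- solve the inequality
    have hXfin' : X ≠ ⊤ := ne_top_of_le_ne_top (by simp) hXfin
    have htr : X.toReal ≤ S.a * X.toReal + Cc S xs := by
      have h2 := ENNReal.toReal_mono ?fin hmain
      case fin =>
        apply ENNReal.add_ne_top.2
        constructor
        · exact ENNReal.mul_ne_top ENNReal.ofReal_ne_top hXfin'
        · exact ENNReal.ofReal_ne_top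
      rw [ENNReal.toReal_add (ENNReal.mul_ne_top ENNReal.ofReal_ne_top hXfin')
        ENNReal.ofReal_ne_top, ENNReal.toReal_mul, ENNReal.toReal_ofReal S.a_pos.le,
        ENNReal.toReal_ofReal (Cc_nonneg S xs)] at h2
      exact h2
    have hsolve : X.toReal ≤ Cc S xs / (1 - S.a) := by
      have h1a : 0 < 1 - S.a := by linarith [S.a_lt_one]
      rw [le_div_iff₀ h1a]
      nlinarith [htr]
    calc X = ENNReal.ofReal X.toReal := (ENNReal.ofReal_toReal hXfin').symm
      _ ≤ ENNReal.ofReal (Cc S xs / (1 - S.a)) := ENNReal.ofReal_le_ofReal hsolve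
  -- monotone limit
  have hmeas : ∀ n : ℕ, Measurable (({x | f x ≤ (n:ℝ≥0∞)}).indicator f) := fun n =>
    hfm.indicator (hfm measurableSet_Iic)
  have hmono : Monotone fun (n:ℕ) => ({x | f x ≤ (n:ℝ≥0∞)}).indicator f := by
    intro m n hmn x
    dsimp only
    by_cases hx : x ∈ {x | f x ≤ (m:ℝ≥0∞)}
    · rw [Set.indicator_of_mem hx]
      have hcast : ((m:ℕ):ℝ≥0∞) ≤ ((n:ℕ):ℝ≥0∞) := by exact_mod_cast hmn
      have hx2 : x ∈ {x | f x ≤ (n:ℝ≥0∞)} := le_trans hx hcast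
      rw [Set.indicator_of_mem hx2]
    · rw [Set.indicator_of_notMem hx]
      exact zero_le
  have hlim : ∀ x, (⨆ n : ℕ, ({x | f x ≤ (n:ℝ≥0∞)}).indicator f x) = f x := by
    intro x
    obtain ⟨n, hn⟩ := ENNReal.exists_nat_gt (show f x ≠ ⊤ from ENNReal.ofReal_ne_top)
    apply le_antisymm
    · exact iSup_le fun m => Set.indicator_le_self _ _ x
    · calc f x = ({x | f x ≤ (n:ℝ≥0∞)}).indicator f x :=
            (Set.indicator_of_mem (show x ∈ {y | f y ≤ (n:ℝ≥0∞)} from hn.le) f).symm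
        _ ≤ _ := le_iSup (fun m : ℕ => ({x | f x ≤ (m:ℝ≥0∞)}).indicator f x) n
  calc ∫⁻ x, f x ∂μ = ∫⁻ x, ⨆ n:ℕ, ({x | f x ≤ (n:ℝ≥0∞)}).indicator f x ∂μ :=
        lintegral_congr fun x => (hlim x).symm
    _ = ⨆ n:ℕ, ∫⁻ x, ({x | f x ≤ (n:ℝ≥0∞)}).indicator f x ∂μ := lintegral_iSup hmeas hmono
    _ ≤ ENNReal.ofReal (Cc S xs / (1 - S.a)) := by
        refine iSup_le fun n => ?_
        have hAn : MeasurableSet {x | f x ≤ (n:ℝ≥0∞)} := hfm measurableSet_Iic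
        rw [lintegral_indicator hAn]
        exact key n

end Chunk3


-- ===== chunk 4 : contraction estimates =====
section Chunk4
variable {K : Type*} [MetricSpace K] [MeasurableSpace K]
  {N : ℕ} {E : Type*} [Fintype E] [DecidableEq E]
  (S : CMS K N E)

lemma Ks_eq_of_mem {x : K} {i j : Fin N} (hi : x ∈ S.Ks i) (hj : x ∈ S.Ks j) : i = j := by
  by_contra hne
  exact (S.Ks_disj i j hne).ne_of_mem hi hj rfl

lemma mem_of_p_ne_zero {e : E} {x : K} (h : S.p e x ≠ 0) : x ∈ S.Ks (S.ι e) := by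
  by_contra hx
  exact h (S.p_zero e x hx)

lemma GS_nonneg (k : ℕ) (z u v : K) :
    0 ≤ ∑ l ∈ words (E := E) k, S.cylWeight z l * dist (apl S l u) (apl S l v) :=
  Finset.sum_nonneg fun l _ => mul_nonneg (cylW_nonneg S l z) dist_nonneg

lemma contract_sum (k : ℕ) : ∀ (i : Fin N) (z u : K), z ∈ S.Ks i → u ∈ S.Ks i →
    ∑ l ∈ words (E := E) k, S.cylWeight z l * dist (apl S l z) (apl S l u)
      ≤ S.a ^ k * dist z u := by
  induction k with
  | zero => intro i z u hz hu; simp [words]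
  | succ k ih =>
      intro i z u hz hu
      rw [sum_words_succ]
      have hterm : ∀ e : E,
          ∑ l ∈ words (E := E) k, S.cylWeight z (e :: l)
              * dist (apl S (e :: l) z) (apl S (e :: l) u)
            ≤ S.p e z * (S.a ^ k * dist (S.w e z) (S.w e u)) := by
        intro e
        simp only [cylW_cons, apl_cons, mul_assoc]
        rw [← Finset.mul_sum]
        by_cases hpe : S.p e z = 0
        · rw [hpe, zero_mul, zero_mul]
        · have hz' : z ∈ S.Ks (S.ι e) := mem_of_p_ne_zero S hpe
          have hie : S.ι e = i := Ks_eq_of_mem S hz' hz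
          have hu' : u ∈ S.Ks (S.ι e) := hie ▸ hu
          exact mul_le_mul_of_nonneg_left
            (ih (S.τ e) (S.w e z) (S.w e u) (S.w_maps e hz') (S.w_maps e hu'))
            (S.p_nonneg e z)
      calc ∑ e : E, ∑ l ∈ words (E := E) k, S.cylWeight z (e :: l)
              * dist (apl S (e :: l) z) (apl S (e :: l) u)
          ≤ ∑ e : E, S.p e z * (S.a ^ k * dist (S.w e z) (S.w e u)) :=
            Finset.sum_le_sum fun e _ => hterm e
        _ = S.a ^ k * ∑ e : E, S.p e z * dist (S.w e z) (S.w e u) := by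
            rw [Finset.mul_sum]; congr 1; funext e; ring
        _ ≤ S.a ^ k * (S.a * dist z u) :=
            mul_le_mul_of_nonneg_left (S.contractive i z hz u hu) (pow_nonneg S.a_pos.le _)
        _ = S.a ^ (k+1) * dist z u := by ring

lemma pair_sum (xs : Fin N → K) (hxs : ∀ i, xs i ∈ S.Ks i) (j : ℕ)
    (z' v : K) (i' : Fin N) (hz' : z' ∈ S.Ks i') (hv : v ∈ S.Ks i') :
    ∑ e₁ : E, S.p e₁ z' * ∑ P ∈ words (E := E) j, S.cylWeight (S.w e₁ z') P
        * dist (apl S P (S.w e₁ (xs (S.ι e₁)))) (apl S P (S.w e₁ v))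
      ≤ S.a ^ (j+1) * (dist z' (xs i') + dist z' v) := by
  have hterm : ∀ e₁ : E, S.p e₁ z' * ∑ P ∈ words (E := E) j, S.cylWeight (S.w e₁ z') P
        * dist (apl S P (S.w e₁ (xs (S.ι e₁)))) (apl S P (S.w e₁ v))
      ≤ S.p e₁ z' * (S.a ^ j *
          (dist (S.w e₁ z') (S.w e₁ (xs i')) + dist (S.w e₁ z') (S.w e₁ v))) := by
    intro e₁
    by_cases hpe : S.p e₁ z' = 0
    · rw [hpe, zero_mul, zero_mul]
    · have hz1 : z' ∈ S.Ks (S.ι e₁) := mem_of_p_ne_zero S hpe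
      have hie : S.ι e₁ = i' := Ks_eq_of_mem S hz1 hz'
      refine mul_le_mul_of_nonneg_left ?_ (S.p_nonneg e₁ z')
      have hZ : S.w e₁ z' ∈ S.Ks (S.τ e₁) := S.w_maps e₁ hz1
      have hU : S.w e₁ (xs (S.ι e₁)) ∈ S.Ks (S.τ e₁) := S.w_maps e₁ (hxs _)
      have hV : S.w e₁ v ∈ S.Ks (S.τ e₁) := S.w_maps e₁ (hie ▸ hv)
      calc ∑ P ∈ words (E := E) j, S.cylWeight (S.w e₁ z') P
              * dist (apl S P (S.w e₁ (xs (S.ι e₁)))) (apl S P (S.w e₁ v))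
          ≤ ∑ P ∈ words (E := E) j, (S.cylWeight (S.w e₁ z') P
              * dist (apl S P (S.w e₁ z')) (apl S P (S.w e₁ (xs (S.ι e₁))))
            + S.cylWeight (S.w e₁ z') P
              * dist (apl S P (S.w e₁ z')) (apl S P (S.w e₁ v))) := by
            refine Finset.sum_le_sum fun P _ => ?_
            rw [← mul_add]
            exact mul_le_mul_of_nonneg_left
              (dist_triangle_left _ _ _) (cylW_nonneg S P _)
        _ = (∑ P ∈ words (E := E) j, S.cylWeight (S.w e₁ z') P
              * dist (apl S P (S.w e₁ z')) (apl S P (S.w e₁ (xs (S.ι e₁)))))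
            + ∑ P ∈ words (E := E) j, S.cylWeight (S.w e₁ z') P
              * dist (apl S P (S.w e₁ z')) (apl S P (S.w e₁ v)) :=
            Finset.sum_add_distrib
        _ ≤ S.a ^ j * dist (S.w e₁ z') (S.w e₁ (xs (S.ι e₁)))
            + S.a ^ j * dist (S.w e₁ z') (S.w e₁ v) :=
            add_le_add (contract_sum S j (S.τ e₁) _ _ hZ hU) (contract_sum S j (S.τ e₁) _ _ hZ hV)
        _ = S.a ^ j * (dist (S.w e₁ z') (S.w e₁ (xs i')) + dist (S.w e₁ z') (S.w e₁ v)) := by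
            rw [hie]; ring
  calc ∑ e₁ : E, S.p e₁ z' * ∑ P ∈ words (E := E) j, S.cylWeight (S.w e₁ z') P
          * dist (apl S P (S.w e₁ (xs (S.ι e₁)))) (apl S P (S.w e₁ v))
      ≤ ∑ e₁ : E, S.p e₁ z' * (S.a ^ j *
          (dist (S.w e₁ z') (S.w e₁ (xs i')) + dist (S.w e₁ z') (S.w e₁ v))) :=
        Finset.sum_le_sum fun e₁ _ => hterm e₁
    _ = S.a ^ j * ((∑ e₁ : E, S.p e₁ z' * dist (S.w e₁ z') (S.w e₁ (xs i')))
          + ∑ e₁ : E, S.p e₁ z' * dist (S.w e₁ z') (S.w e₁ v)) := by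
        rw [← Finset.sum_add_distrib, Finset.mul_sum]
        congr 1; funext e₁; ring
    _ ≤ S.a ^ j * ((S.a * dist z' (xs i')) + S.a * dist z' v) := by
        refine mul_le_mul_of_nonneg_left
          (add_le_add (S.contractive i' z' hz' _ (hxs i')) (S.contractive i' z' hz' v hv))
          (pow_nonneg S.a_pos.le _)
    _ = S.a ^ (j+1) * (dist z' (xs i') + dist z' v) := by ring

lemma mid_sum_bound (xs : Fin N → K) (hxs : ∀ i, xs i ∈ S.Ks i) (j : ℕ) (y : K) :
    ∑ m ∈ words (E := E) (j+2), S.cylWeight y m * dW S xs m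
      ≤ S.a ^ (j+1) * (2 * S.a * phi S xs y + Cc S xs) := by
  rw [show j+2 = (j+1)+1 from rfl, sum_words_succ]
  have hterm : ∀ e' : E,
      ∑ m ∈ words (E := E) (j+1), S.cylWeight y (e' :: m) * dW S xs (e' :: m)
        ≤ S.p e' y * (S.a ^ (j+1) * (2 * dist (S.w e' y) (S.w e' (xs (S.ι e'))) + Cc S xs)) := by
    intro e'
    rw [sum_words_succ]
    by_cases hpe : S.p e' y = 0
    · have : ∀ e₁ : E, ∀ m ∈ words (E := E) j,
          S.cylWeight y (e' :: e₁ :: m) * dW S xs (e' :: e₁ :: m) = 0 := by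
        intro e₁ m _
        simp [cylW_cons, hpe]
      rw [hpe]
      calc ∑ e₁ : E, ∑ m ∈ words (E := E) j,
              S.cylWeight y (e' :: e₁ :: m) * dW S xs (e' :: e₁ :: m)
          = 0 := by
            refine Finset.sum_eq_zero fun e₁ _ => Finset.sum_eq_zero fun m hm => this e₁ m hm
        _ ≤ 0 * (S.a ^ (j+1) * (2 * dist (S.w e' y) (S.w e' (xs (S.ι e'))) + Cc S xs)) := by
            rw [zero_mul]
    · have hy : y ∈ S.Ks (S.ι e') := mem_of_p_ne_zero S hpe
      have hz' : S.w e' y ∈ S.Ks (S.τ e') := S.w_maps e' hy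
      have hv : S.w e' (xs (S.ι e')) ∈ S.Ks (S.τ e') := S.w_maps e' (hxs _)
      have hps := pair_sum S xs hxs j (S.w e' y) (S.w e' (xs (S.ι e'))) (S.τ e') hz' hv
      have hre : ∀ e₁ : E, ∀ m ∈ words (E := E) j,
          S.cylWeight y (e' :: e₁ :: m) * dW S xs (e' :: e₁ :: m)
            = S.p e' y * (S.p e₁ (S.w e' y) * (S.cylWeight (S.w e₁ (S.w e' y)) m
                * dist (apl S m (S.w e₁ (xs (S.ι e₁)))) (apl S m (S.w e₁ (S.w e' (xs (S.ι e'))))))) := by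
        intro e₁ m _
        simp only [cylW_cons, dW, apl_cons]
        ring
      calc ∑ e₁ : E, ∑ m ∈ words (E := E) j,
              S.cylWeight y (e' :: e₁ :: m) * dW S xs (e' :: e₁ :: m)
          = S.p e' y * ∑ e₁ : E, S.p e₁ (S.w e' y) * ∑ m ∈ words (E := E) j,
              S.cylWeight (S.w e₁ (S.w e' y)) m
                * dist (apl S m (S.w e₁ (xs (S.ι e₁)))) (apl S m (S.w e₁ (S.w e' (xs (S.ι e'))))) := by
            rw [Finset.mul_sum]
            refine Finset.sum_congr rfl fun e₁ _ => ?_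
            rw [Finset.mul_sum, Finset.mul_sum]
            exact Finset.sum_congr rfl fun m hm => hre e₁ m hm
        _ ≤ S.p e' y * (S.a ^ (j+1) * (dist (S.w e' y) (xs (S.τ e'))
              + dist (S.w e' y) (S.w e' (xs (S.ι e'))))) :=
            mul_le_mul_of_nonneg_left hps (S.p_nonneg e' y)
        _ ≤ S.p e' y * (S.a ^ (j+1) * (2 * dist (S.w e' y) (S.w e' (xs (S.ι e'))) + Cc S xs)) := by
            refine mul_le_mul_of_nonneg_left (mul_le_mul_of_nonneg_left ?_
              (pow_nonneg S.a_pos.le _)) (S.p_nonneg e' y)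
            have : dist (S.w e' y) (xs (S.τ e'))
                ≤ dist (S.w e' y) (S.w e' (xs (S.ι e'))) + Cc S xs :=
              le_trans (dist_triangle _ (S.w e' (xs (S.ι e'))) _)
                (add_le_add le_rfl (dist_le_Cc S xs e'))
            linarith
  obtain ⟨iy, hiy⟩ := exists_mem_Ks S y
  calc ∑ e' : E, ∑ m ∈ words (E := E) (j+1), S.cylWeight y (e' :: m) * dW S xs (e' :: m)
      ≤ ∑ e' : E, S.p e' y * (S.a ^ (j+1)
          * (2 * dist (S.w e' y) (S.w e' (xs (S.ι e'))) + Cc S xs)) :=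
        Finset.sum_le_sum fun e' _ => hterm e'
    _ ≤ ∑ e' : E, S.p e' y * (S.a ^ (j+1)
          * (2 * dist (S.w e' y) (S.w e' (xs iy)) + Cc S xs)) := by
        refine Finset.sum_le_sum fun e' _ => ?_
        by_cases hpe : S.p e' y = 0
        · rw [hpe, zero_mul, zero_mul]
        · have hy' : y ∈ S.Ks (S.ι e') := mem_of_p_ne_zero S hpe
          have : S.ι e' = iy := Ks_eq_of_mem S hy' hiy
          rw [this]
    _ = (S.a ^ (j+1) * 2) * (∑ e' : E, S.p e' y * dist (S.w e' y) (S.w e' (xs iy)))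
          + (S.a ^ (j+1) * Cc S xs) * ∑ e' : E, S.p e' y := by
        rw [Finset.mul_sum, Finset.mul_sum, ← Finset.sum_add_distrib]
        exact Finset.sum_congr rfl fun e' _ => by ring
    _ ≤ (S.a ^ (j+1) * 2) * (S.a * dist y (xs iy)) + (S.a ^ (j+1) * Cc S xs) * 1 := by
        refine add_le_add (mul_le_mul_of_nonneg_left
          (S.contractive iy y hiy _ (hxs iy))
          (by have := pow_nonneg S.a_pos.le (j+1); linarith)) ?_
        rw [S.p_sum_one y]
    _ = S.a ^ (j+1) * (2 * S.a * phi S xs y + Cc S xs) := by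
        rw [phi_eq S xs hiy]; ring

end Chunk4


-- ===== chunk 5 : weights of words =====
section Chunk5
variable {K : Type*} [MetricSpace K] [MeasurableSpace K] [BorelSpace K]
  {N : ℕ} {E : Type*} [Fintype E] [DecidableEq E]
  (S : CMS K N E) (μ : Measure K)

/-- weight of a cylinder word -/
noncomputable def Wgt (l : List E) : ℝ≥0∞ := ∫⁻ x, ENNReal.ofReal (S.cylWeight x l) ∂μ

lemma Wgt_le_one (hμ : IsProbabilityMeasure μ) (l : List E) : Wgt S μ l ≤ 1 := by
  calc Wgt S μ l ≤ ∫⁻ _, 1 ∂μ :=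
        lintegral_mono fun x => by
          simpa using ENNReal.ofReal_le_ofReal (cylW_le_one S l x)
    _ = 1 := by simp

/-- sum over two-sided extensions of a fixed middle word -/
lemma sum_Wgt_ext (hinv : S.adjoint μ = μ) (winl : List E) (L : ℕ) :
    ∑ q ∈ (words (E := E) L) ×ˢ (words (E := E) L), Wgt S μ (q.1 ++ winl ++ q.2)
      = Wgt S μ winl := by
  have hmeas : ∀ l : List E, Measurable fun x => ENNReal.ofReal (S.cylWeight x l) :=
    fun l => ENNReal.measurable_ofReal.comp (cylW_meas S l)
  have hpt : ∀ x : K, ∑ q ∈ (words (E := E) L) ×ˢ (words (E := E) L),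
      ENNReal.ofReal (S.cylWeight x (q.1 ++ winl ++ q.2))
        = (Top S)^[L] (fun y => ENNReal.ofReal (S.cylWeight y winl)) x := by
    intro x
    rw [Finset.sum_product]
    rw [← sum_cylW_mul S L (fun y => ENNReal.ofReal (S.cylWeight y winl)) x]
    refine Finset.sum_congr rfl fun l1 _ => ?_
    have : ∀ l2 : List E, S.cylWeight x (l1 ++ winl ++ l2)
        = S.cylWeight x l1 * S.cylWeight (apl S l1 x) winl
            * S.cylWeight (apl S winl (apl S l1 x)) l2 := by
      intro l2
      rw [cylW_append, cylW_append, apl_append]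
    calc ∑ l2 ∈ words (E := E) L, ENNReal.ofReal (S.cylWeight x (l1 ++ winl ++ l2))
        = ∑ l2 ∈ words (E := E) L, ENNReal.ofReal (S.cylWeight x l1)
            * ENNReal.ofReal (S.cylWeight (apl S l1 x) winl)
            * ENNReal.ofReal (S.cylWeight (apl S winl (apl S l1 x)) l2) := by
          refine Finset.sum_congr rfl fun l2 _ => ?_
          rw [this l2, ENNReal.ofReal_mul (mul_nonneg (cylW_nonneg S _ _) (cylW_nonneg S _ _)),
            ENNReal.ofReal_mul (cylW_nonneg S _ _)]
      _ = ENNReal.ofReal (S.cylWeight x l1) * ENNReal.ofReal (S.cylWeight (apl S l1 x) winl) := by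
          rw [← Finset.mul_sum, sum_ofReal_cylW, mul_one]
  calc ∑ q ∈ (words (E := E) L) ×ˢ (words (E := E) L), Wgt S μ (q.1 ++ winl ++ q.2)
      = ∫⁻ x, ∑ q ∈ (words (E := E) L) ×ˢ (words (E := E) L),
          ENNReal.ofReal (S.cylWeight x (q.1 ++ winl ++ q.2)) ∂μ :=
        (lintegral_finset_sum _ fun q _ => hmeas _).symm
    _ = ∫⁻ x, (Top S)^[L] (fun y => ENNReal.ofReal (S.cylWeight y winl)) x ∂μ :=
        lintegral_congr hpt
    _ = Wgt S μ winl := lintegral_Top_iterate S μ hinv (hmeas winl) L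

/-- the crucial expectation bound -/
lemma Eall_bound (hμ : IsProbabilityMeasure μ) (hinv : S.adjoint μ = μ)
    (xs : Fin N → K) (hxs : ∀ i, xs i ∈ S.Ks i) (d j k3 : ℕ) :
    ∑ l ∈ words (E := E) (d + ((j+2) + k3)),
        Wgt S μ l * ENNReal.ofReal (dW S xs ((l.drop d).take (j+2)))
      ≤ ENNReal.ofReal (S.a ^ (j+1)) * (ENNReal.ofReal (2 * S.a)
          * ∫⁻ x, ENNReal.ofReal (phi S xs x) ∂μ + ENNReal.ofReal (Cc S xs)) := by
  have hmeas : ∀ l : List E, Measurable fun x => ENNReal.ofReal (S.cylWeight x l) :=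
    fun l => ENNReal.measurable_ofReal.comp (cylW_meas S l)
  set G : K → ℝ≥0∞ := fun y => ∑ m ∈ words (E := E) (j+2),
    ENNReal.ofReal (S.cylWeight y m) * ENNReal.ofReal (dW S xs m) with hG
  have hGmeas : Measurable G :=
    Finset.measurable_sum _ fun m _ => (hmeas m).mul_const _
  have hpt : ∀ x : K, ∑ l ∈ words (E := E) (d + ((j+2) + k3)),
      ENNReal.ofReal (S.cylWeight x l) * ENNReal.ofReal (dW S xs ((l.drop d).take (j+2)))
        = (Top S)^[d] G x := by
    intro x
    rw [sum_words_append]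
    rw [← sum_cylW_mul S d G x]
    refine Finset.sum_congr rfl fun l1 hl1 => ?_
    have hlen1 : l1.length = d := mem_words.1 hl1
    rw [hG]
    rw [Finset.mul_sum]
    rw [sum_words_append]
    refine Finset.sum_congr rfl fun m hm => ?_
    have hlenm : m.length = j + 2 := mem_words.1 hm
    calc ∑ l3 ∈ words (E := E) k3, ENNReal.ofReal (S.cylWeight x (l1 ++ (m ++ l3)))
          * ENNReal.ofReal (dW S xs (((l1 ++ (m ++ l3)).drop d).take (j+2)))
        = ∑ l3 ∈ words (E := E) k3, (ENNReal.ofReal (S.cylWeight x l1)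
            * (ENNReal.ofReal (S.cylWeight (apl S l1 x) m) * ENNReal.ofReal (dW S xs m)))
            * ENNReal.ofReal (S.cylWeight (apl S m (apl S l1 x)) l3) := by
          refine Finset.sum_congr rfl fun l3 _ => ?_
          have hdrop : (l1 ++ (m ++ l3)).drop d = m ++ l3 := by
            rw [← hlen1]; exact List.drop_left (l₁ := l1) (l₂ := m ++ l3)
          have htake : (m ++ l3).take (j+2) = m := by
            rw [← hlenm]; exact List.take_left (l₁ := m) (l₂ := l3)
          rw [hdrop, htake, cylW_append, cylW_append,
            ENNReal.ofReal_mul (cylW_nonneg S l1 x),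
            ENNReal.ofReal_mul (cylW_nonneg S m _)]
          ring
      _ = ENNReal.ofReal (S.cylWeight x l1)
            * (ENNReal.ofReal (S.cylWeight (apl S l1 x) m) * ENNReal.ofReal (dW S xs m)) := by
          rw [← Finset.mul_sum, sum_ofReal_cylW, mul_one]
  have hphim : Measurable fun x => ENNReal.ofReal (phi S xs x) :=
    ENNReal.measurable_ofReal.comp (phi_meas S xs)
  calc ∑ l ∈ words (E := E) (d + ((j+2) + k3)),
        Wgt S μ l * ENNReal.ofReal (dW S xs ((l.drop d).take (j+2)))
      = ∫⁻ x, ∑ l ∈ words (E := E) (d + ((j+2) + k3)),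
          ENNReal.ofReal (S.cylWeight x l)
            * ENNReal.ofReal (dW S xs ((l.drop d).take (j+2))) ∂μ := by
        rw [lintegral_finset_sum _ (fun l _ => (hmeas l).mul_const _)]
        exact Finset.sum_congr rfl fun l _ => (lintegral_mul_const _ (hmeas l)).symm
    _ = ∫⁻ x, (Top S)^[d] G x ∂μ := lintegral_congr hpt
    _ = ∫⁻ x, G x ∂μ := lintegral_Top_iterate S μ hinv hGmeas d
    _ ≤ ∫⁻ y, ENNReal.ofReal (S.a ^ (j+1)) * (ENNReal.ofReal (2 * S.a)
          * ENNReal.ofReal (phi S xs y) + ENNReal.ofReal (Cc S xs)) ∂μ := by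
        refine lintegral_mono fun y => ?_
        have h1 : G y = ENNReal.ofReal (∑ m ∈ words (E := E) (j+2),
            S.cylWeight y m * dW S xs m) := by
          rw [ENNReal.ofReal_sum_of_nonneg
            (fun m _ => mul_nonneg (cylW_nonneg S _ _) (dW_nonneg S xs m))]
          exact Finset.sum_congr rfl fun m _ => (ENNReal.ofReal_mul (cylW_nonneg S _ _)).symm
        rw [h1]
        calc ENNReal.ofReal (∑ m ∈ words (E := E) (j+2), S.cylWeight y m * dW S xs m)
            ≤ ENNReal.ofReal (S.a ^ (j+1) * (2 * S.a * phi S xs y + Cc S xs)) :=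
              ENNReal.ofReal_le_ofReal (mid_sum_bound S xs hxs j y)
          _ = ENNReal.ofReal (S.a ^ (j+1)) * (ENNReal.ofReal (2 * S.a)
                * ENNReal.ofReal (phi S xs y) + ENNReal.ofReal (Cc S xs)) := by
              rw [ENNReal.ofReal_mul (pow_nonneg S.a_pos.le _),
                ENNReal.ofReal_add (mul_nonneg (by linarith [S.a_pos] : (0:ℝ) ≤ 2 * S.a)
                  (phi_nonneg S xs y)) (Cc_nonneg S xs),
                ENNReal.ofReal_mul (by linarith [S.a_pos] : (0:ℝ) ≤ 2 * S.a)]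
    _ = ENNReal.ofReal (S.a ^ (j+1)) * (ENNReal.ofReal (2 * S.a)
          * ∫⁻ x, ENNReal.ofReal (phi S xs x) ∂μ + ENNReal.ofReal (Cc S xs)) := by
        rw [lintegral_const_mul _ (f := fun y => ENNReal.ofReal (2 * S.a) * ENNReal.ofReal (phi S xs y)
            + ENNReal.ofReal (Cc S xs)) ((hphim.const_mul _).add measurable_const),
          lintegral_add_right _ measurable_const,
          lintegral_const_mul _ hphim, lintegral_const]
        simp

end Chunk5


-- ===== chunk 6 : admissibility and list glue =====
section Chunk6
variable {K : Type*} [MetricSpace K] [MeasurableSpace K] [BorelSpace K]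
  {N : ℕ} {E : Type*} [Fintype E] [DecidableEq E]
  (S : CMS K N E) (μ : Measure K)

lemma cylW_listOf_ge (δ : ℝ) (hδ : 0 < δ) (hp : ∀ e, ∀ x ∈ S.Ks (S.ι e), δ ≤ S.p e x)
    {σ : ℤ → E} (hσ : σ ∈ S.SigmaG) :
    ∀ (k : ℕ) (s : ℤ) (x : K), x ∈ S.Ks (S.ι (σ s)) →
      δ ^ k ≤ S.cylWeight x (listOf σ s k) := by
  intro k
  induction k with
  | zero => intro s x _; simp
  | succ k ih =>
      intro s x hx
      rw [listOf_succ, cylW_cons, pow_succ, mul_comm (δ ^ k) δ]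
      have h1 : δ ≤ S.p (σ s) x := hp (σ s) x hx
      have h2 : S.w (σ s) x ∈ S.Ks (S.ι (σ (s+1))) := by
        rw [← hσ s]
        exact S.w_maps (σ s) hx
      exact mul_le_mul h1 (ih (s+1) (S.w (σ s) x) h2) (pow_nonneg hδ.le k)
        (S.p_nonneg _ _)

lemma Wgt_listOf_pos (δ : ℝ) (hδ : 0 < δ) (hp : ∀ e, ∀ x ∈ S.Ks (S.ι e), δ ≤ S.p e x)
    (hpos : ∀ e, 0 < μ (S.Ks (S.ι e)))
    {σ : ℤ → E} (hσ : σ ∈ S.SigmaG) (s : ℤ) (k : ℕ) :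
    0 < Wgt S μ (listOf σ s k) := by
  have hsub : ENNReal.ofReal (δ ^ k) * μ (S.Ks (S.ι (σ s))) ≤ Wgt S μ (listOf σ s k) := by
    calc ENNReal.ofReal (δ ^ k) * μ (S.Ks (S.ι (σ s)))
        = ∫⁻ _ in S.Ks (S.ι (σ s)), ENNReal.ofReal (δ ^ k) ∂μ := by
          rw [setLIntegral_const]
      _ ≤ ∫⁻ x in S.Ks (S.ι (σ s)), ENNReal.ofReal (S.cylWeight x (listOf σ s k)) ∂μ := by
          refine setLIntegral_mono (ENNReal.measurable_ofReal.comp (cylW_meas S _)) ?_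
          intro x hx
          exact ENNReal.ofReal_le_ofReal (cylW_listOf_ge S δ hδ hp hσ k s x hx)
      _ ≤ Wgt S μ (listOf σ s k) := lintegral_mono' Measure.restrict_le_self le_rfl
  refine lt_of_lt_of_le ?_ hsub
  exact ENNReal.mul_pos (ENNReal.ofReal_pos.2 (pow_pos hδ k)).ne' (hpos (σ s)).ne'

lemma chain_of_cylW_ne_zero :
    ∀ (l : List E) (x : K), S.cylWeight x l ≠ 0 →
      l.Chain' (fun e e' => S.τ e = S.ι e') := by
  intro l
  induction l with
  | nil => intro x _; exact List.isChain_nil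
  | cons e l ih =>
      intro x h
      rw [cylW_cons] at h
      have hp : S.p e x ≠ 0 := fun h0 => h (by rw [h0, zero_mul])
      have hc : S.cylWeight (S.w e x) l ≠ 0 := fun h0 => h (by rw [h0, mul_zero])
      have hchain := ih (S.w e x) hc
      cases l with
      | nil => exact List.isChain_singleton e
      | cons e' l' =>
          refine List.isChain_cons_cons.2 ⟨?_, hchain⟩
          have hx : x ∈ S.Ks (S.ι e) := mem_of_p_ne_zero S hp
          have hw : S.w e x ∈ S.Ks (S.τ e) := S.w_maps e hx
          have hp' : S.p e' (S.w e x) ≠ 0 := by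
            rw [cylW_cons] at hc
            exact fun h0 => hc (by rw [h0, zero_mul])
          exact Ks_eq_of_mem S hw (mem_of_p_ne_zero S hp')

lemma chain_getD (e₀ : E) :
    ∀ (l : List E), l.Chain' (fun e e' => S.τ e = S.ι e') →
      ∀ i : ℕ, i + 1 < l.length → S.τ (l.getD i e₀) = S.ι (l.getD (i+1) e₀) := by
  intro l
  induction l with
  | nil => intro _ i hi; simp at hi
  | cons e l ih =>
      intro h i hi
      cases l with
      | nil => simp at hi
      | cons e' l' =>
          simp only [List.Chain', List.isChain_cons_cons] at h
          cases i with
          | zero => simpa using h.1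
          | succ i =>
              simp only [List.getD_cons_succ]
              exact ih h.2 i (by simpa using hi)

/-- reading back a list as a function on ℤ -/
def tauOf (e₀ : E) (l : List E) (s : ℤ) : ℤ → E := fun i => l.getD (i - s).toNat e₀

lemma listOf_tauOf (e₀ : E) (l : List E) (s : ℤ) :
    ∀ (k : ℕ) (s' : ℤ), s ≤ s' → (s' - s).toNat + k ≤ l.length →
      listOf (tauOf e₀ l s) s' k = (l.drop (s' - s).toNat).take k := by
  intro k
  induction k with
  | zero => intro s' _ _; simp
  | succ k ih =>
      intro s' hs hlen
      rw [listOf_succ, ih (s' + 1) (by omega) (by omega)]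
      have hlt : (s' - s).toNat < l.length := by omega
      have hdrop : l.drop (s' - s).toNat = l[(s' - s).toNat] :: l.drop ((s' - s).toNat + 1) :=
        List.drop_eq_getElem_cons hlt
      have h1 : (s' + 1 - s).toNat = (s' - s).toNat + 1 := by omega
      rw [h1, hdrop]
      simp only [List.take_succ_cons]
      congr 1
      rw [tauOf]
      exact List.getD_eq_getElem l e₀ hlt

end Chunk6


-- ===== chunk 7 : coding sequences =====
section Chunk7
variable {K : Type*} [MetricSpace K] [MeasurableSpace K] [BorelSpace K]
  {N : ℕ} {E : Type*} [Fintype E] [DecidableEq E]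
  (S : CMS K N E)

lemma comp_eq_apl (ρ : ℤ → E) : ∀ (j : ℕ) (x : K),
    S.comp ρ j x = apl S (listOf ρ (-(j:ℤ)) (j+1)) x := by
  intro j
  induction j with
  | zero => intro x; simp [CMS.comp, listOf]
  | succ j ih =>
      intro x
      have h1 : S.comp ρ (j+1) x = S.comp ρ j (S.w (ρ (-((j:ℤ)+1))) x) := rfl
      rw [h1, ih]
      have h2 : listOf ρ (-((j:ℕ)+1:ℤ)) (j+2)
          = ρ (-((j:ℤ)+1)) :: listOf ρ (-(j:ℤ)) (j+1) := by
        rw [show (-((j:ℕ)+1:ℤ)) = -((j:ℤ)+1) by push_cast; ring]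
        rw [listOf_succ]
        congr 1
        · congr 1
          omega
      rw [show ((j:ℕ)+1+1 : ℕ) = j + 2 from rfl]
      rw [show (-(((j:ℕ)+1:ℕ) : ℤ)) = (-((j:ℕ)+1:ℤ)) by push_cast; ring]
      rw [h2, apl_cons]

lemma codeSeq_eq_apl (xs : Fin N → K) (ρ : ℤ → E) (j : ℕ) :
    S.codeSeq xs ρ j = apl S (listOf ρ (-(j:ℤ)) (j+1)) (xs (S.ι (ρ (-(j:ℤ))))) := by
  rw [CMS.codeSeq, comp_eq_apl]

lemma shiftZ_apply (b : ℤ) (ζ : ℤ → E) (i : ℤ) : shiftZ E b ζ i = ζ (i + b) := rfl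

lemma codeSeq_shift_eq (xs : Fin N → K) (ζ : ℤ → E) (b : ℤ) (j : ℕ) :
    S.codeSeq xs (shiftZ E b ζ) j
      = apl S (listOf ζ (b - j) (j+1)) (xs (S.ι (ζ (b - j)))) := by
  rw [codeSeq_eq_apl, listOf_shift, shiftZ_apply, show -(j:ℤ) + b = b - j by ring]

lemma dist_codeSeq_shift (xs : Fin N → K) (ζ : ℤ → E) (b : ℤ) (j : ℕ) :
    dist (S.codeSeq xs (shiftZ E b ζ) j) (S.codeSeq xs (shiftZ E b ζ) (j+1))
      = dW S xs (listOf ζ (b - j - 1) (j+2)) := by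
  rw [codeSeq_shift_eq, codeSeq_shift_eq]
  have h3 : (b - ((j:ℕ)+1:ℕ) : ℤ) = b - j - 1 := by push_cast; ring
  rw [h3]
  have h4 : listOf ζ (b - (j:ℤ) - 1) ((j+1)+1) = ζ (b - j - 1) :: listOf ζ (b - j) (j+1) := by
    rw [listOf_succ, show b - (j:ℤ) - 1 + 1 = b - j by ring]
  rw [h4, apl_cons]
  have h5 : listOf ζ (b - (j:ℤ)) (j+1) = ζ (b - j) :: listOf ζ (b - j + 1) j := by
    rw [listOf_succ]
  rw [h5]
  simp only [dW]

lemma SigmaG_shift {ζ : ℤ → E} (hζ : ζ ∈ S.SigmaG) (b : ℤ) : shiftZ E b ζ ∈ S.SigmaG := by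
  intro j
  rw [shiftZ_apply, shiftZ_apply]
  have := hζ (j + b)
  rw [show j + 1 + b = j + b + 1 by ring]
  exact this

lemma shiftZ_inv (b : ℤ) (ζ : ℤ → E) : shiftZ E b (shiftZ E (-b) ζ) = ζ := by
  funext j
  rw [shiftZ_apply, shiftZ_apply]
  congr 1
  ring

lemma mem_Yset_of (xs : Fin N → K) {ζ : ℤ → E} (hζ : ζ ∈ S.SigmaG)
    (hconv : ∀ b : ℤ, ∃ Lp, Tendsto (S.codeSeq xs (shiftZ E b ζ)) atTop (nhds Lp)) :
    ζ ∈ S.Yset xs := by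
  rw [CMS.Yset, Set.mem_iInter]
  intro n
  refine ⟨shiftZ E (-n) ζ, ⟨SigmaG_shift S hζ (-n), hconv (-n)⟩, shiftZ_inv n ζ⟩

lemma conv_of_tail_bound (hProper : ∀ A : Set K, Bornology.IsBounded A → IsCompact (closure A))
    (xs : Fin N → K) (ζ : ℤ → E) (b : ℤ) (r : ℝ) (hr0 : 0 ≤ r) (hr1 : r < 1) (J : ℕ)
    (hbound : ∀ j : ℕ, J ≤ j → dW S xs (listOf ζ (b - j - 1) (j+2)) ≤ r ^ j) :
    ∃ Lp, Tendsto (S.codeSeq xs (shiftZ E b ζ)) atTop (nhds Lp) := by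
  haveI : ProperSpace K := by
    constructor
    intro x R
    have h := hProper (Metric.closedBall x R) Metric.isBounded_closedBall
    rwa [Metric.isClosed_closedBall.closure_eq] at h
  haveI : CompleteSpace K := complete_of_proper
  set f := S.codeSeq xs (shiftZ E b ζ) with hfdef
  set g : ℕ → ℝ := fun j => if j < J then dist (f j) (f (j+1)) else r ^ j with hg
  have hb : ∀ j, dist (f j) (f (j+1)) ≤ g j := by
    intro j
    by_cases hj : j < J
    · simp only [hg, if_pos hj]
      exact le_rfl
    · simp only [hg, if_neg hj]
      calc dist (f j) (f (j+1)) = dW S xs (listOf ζ (b - j - 1) (j+2)) :=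
            dist_codeSeq_shift S xs ζ b j
        _ ≤ r ^ j := hbound j (by omega)
  have hsum : Summable g := by
    rw [← summable_nat_add_iff J]
    have heq : (fun j : ℕ => g (j + J)) = fun j : ℕ => r ^ J * r ^ j := by
      funext j
      simp only [hg, if_neg (show ¬ (j + J < J) by omega)]
      rw [pow_add, mul_comm]
    rw [heq]
    exact (summable_geometric_of_lt_one hr0 hr1).mul_left _
  have hcauchy : CauchySeq f := cauchySeq_of_dist_le_of_summable g hb hsum
  exact cauchySeq_tendsto_of_complete hcauchy

end Chunk7


-- ===== chunk 8 : geometric series bounds =====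
section Chunk8
open scoped ENNReal

lemma enc_injective : Function.Injective (fun b : ℤ => (b.natAbs, decide (0 ≤ b))) := by
  intro b b' h
  simp only [Prod.mk.injEq, decide_eq_decide] at h
  omega

lemma Zfin (v : ℝ≥0∞) (hv : v < 1) :
    (∑' b : ℤ, v ^ (2 * b.natAbs)) * (∑' j : ℕ, v ^ j) ≠ ⊤ := by
  have h1v : (1 : ℝ≥0∞) - v ≠ 0 := (tsub_pos_iff_lt.2 hv).ne'
  have hv2 : v ^ 2 < 1 := pow_lt_one₀ zero_le hv two_ne_zero
  have h1v2 : (1 : ℝ≥0∞) - v ^ 2 ≠ 0 := (tsub_pos_iff_lt.2 hv2).ne'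
  have hA : (∑' b : ℤ, v ^ (2 * b.natAbs)) ≤ 2 * (1 - v ^ 2)⁻¹ := by
    calc (∑' b : ℤ, v ^ (2 * b.natAbs))
        ≤ ∑' p : ℕ × Bool, v ^ (2 * p.1) :=
          ENNReal.tsum_comp_le_tsum_of_injective enc_injective (fun p => v ^ (2 * p.1))
      _ = ∑' m : ℕ, ∑' s : Bool, v ^ (2 * m) := ENNReal.tsum_prod'
      _ = ∑' m : ℕ, 2 * (v ^ 2) ^ m := by
          refine tsum_congr fun m => ?_
          rw [tsum_fintype, ← pow_mul]
          simp [two_mul]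
      _ = 2 * ∑' m : ℕ, (v ^ 2) ^ m := ENNReal.tsum_mul_left
      _ = 2 * (1 - v ^ 2)⁻¹ := by rw [ENNReal.tsum_geometric]
  have hB : (∑' j : ℕ, v ^ j) = (1 - v)⁻¹ := ENNReal.tsum_geometric v
  refine ENNReal.mul_ne_top (ne_top_of_le_ne_top ?_ hA)
    (by rw [hB]; exact ENNReal.inv_ne_top.2 h1v)
  exact ENNReal.mul_ne_top (by norm_num) (ENNReal.inv_ne_top.2 h1v2)

lemma sum_le_Z (v : ℝ≥0∞) (F : Finset (ℤ × ℕ)) :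
    ∑ bj ∈ F, v ^ (2 * bj.1.natAbs) * v ^ bj.2
      ≤ (∑' b : ℤ, v ^ (2 * b.natAbs)) * (∑' j : ℕ, v ^ j) := by
  calc ∑ bj ∈ F, v ^ (2 * bj.1.natAbs) * v ^ bj.2
      ≤ ∑' bj : ℤ × ℕ, v ^ (2 * bj.1.natAbs) * v ^ bj.2 := ENNReal.sum_le_tsum F
    _ = ∑' b : ℤ, ∑' j : ℕ, v ^ (2 * b.natAbs) * v ^ j := ENNReal.tsum_prod'
    _ = ∑' b : ℤ, v ^ (2 * b.natAbs) * ∑' j : ℕ, v ^ j := by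
        refine tsum_congr fun b => ENNReal.tsum_mul_left
    _ = _ := ENNReal.tsum_mul_right

lemma exists_T (Kc M0 : ℝ≥0∞) (hK : Kc ≠ ⊤) (hM : 0 < M0) (hMt : M0 ≠ ⊤)
    (v : ℝ≥0∞) (hv : v < 1) : ∃ T : ℕ, Kc * v ^ T < M0 := by
  by_cases hK0 : Kc = 0
  · exact ⟨0, by rw [hK0, zero_mul]; exact hM⟩
  have hε : 0 < (M0 / 2) / Kc :=
    ENNReal.div_pos (ENNReal.half_pos hM.ne').ne' hK
  have htend := ENNReal.tendsto_pow_atTop_nhds_zero_of_lt_one hv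
  obtain ⟨T, hT⟩ := (htend.eventually_lt_const hε).exists
  refine ⟨T, lt_of_le_of_lt ?_ (ENNReal.half_lt_self hM.ne' hMt)⟩
  calc Kc * v ^ T ≤ Kc * ((M0 / 2) / Kc) := mul_le_mul_right hT.le _
    _ ≤ M0 / 2 := ENNReal.mul_div_le

end Chunk8


-- ===== chunk 9 : the level construction =====
section Chunk9
variable {K : Type*} [MetricSpace K] [MeasurableSpace K] [BorelSpace K]
  {N : ℕ} {E : Type*} [Fintype E] [DecidableEq E]
  (S : CMS K N E) (μ : Measure K)

/-- Markov-inequality bound on the weight of words violating one increment constraint. -/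
lemma markov_bound (hμ : IsProbabilityMeasure μ) (hinv : S.adjoint μ = μ)
    (xs : Fin N → K) (hxs : ∀ i, xs i ∈ S.Ks i)
    (n L : ℕ) (win : List E) (hwinlen : win.length = 2*n+1)
    (b : ℤ) (j : ℕ) (hb1 : -((n+L:ℕ):ℤ) ≤ b - j - 1) (hb2 : b ≤ ((n+L:ℕ):ℤ)) :
    ∑ q ∈ (words (E := E) L) ×ˢ (words (E := E) L),
      (if Real.sqrt S.a ^ j
          < dW S xs (((q.1 ++ win ++ q.2).drop ((b - j - 1 + (n+L:ℕ)).toNat)).take (j+2))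
        then Wgt S μ (q.1 ++ win ++ q.2) else 0)
      ≤ ENNReal.ofReal (S.a * Real.sqrt S.a ^ j)
        * (ENNReal.ofReal (2 * S.a) * (∫⁻ x, ENNReal.ofReal (phi S xs x) ∂μ)
            + ENNReal.ofReal (Cc S xs)) := by
  set k : ℕ := n + L with hk
  set r : ℝ := Real.sqrt S.a with hr
  set d : ℕ := (b - j - 1 + (k:ℤ)).toNat with hd
  set k3 : ℕ := ((k:ℤ) - b).toNat with hk3
  set K1 : ℝ≥0∞ := ENNReal.ofReal (2 * S.a) * (∫⁻ x, ENNReal.ofReal (phi S xs x) ∂μ)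
      + ENNReal.ofReal (Cc S xs) with hK1
  have hrpos : 0 < r := Real.sqrt_pos.2 S.a_pos
  have hθpos : 0 < r ^ j := pow_pos hrpos j
  have hθ0 : ENNReal.ofReal (r ^ j) ≠ 0 := (ENNReal.ofReal_pos.2 hθpos).ne'
  have hθt : ENNReal.ofReal (r ^ j) ≠ ⊤ := ENNReal.ofReal_ne_top
  set f : List E → ℝ≥0∞ :=
    fun l => Wgt S μ l * ENNReal.ofReal (dW S xs ((l.drop d).take (j+2))) with hf
  have hlensum : d + ((j+2) + k3) = 2*k+1 := by omega
  have key1 : ENNReal.ofReal (r ^ j) * (∑ q ∈ (words (E := E) L) ×ˢ (words (E := E) L),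
      (if r ^ j < dW S xs (((q.1 ++ win ++ q.2).drop d).take (j+2))
        then Wgt S μ (q.1 ++ win ++ q.2) else 0))
      ≤ ∑ l ∈ words (E := E) (d + ((j+2) + k3)), f l := by
    rw [Finset.mul_sum]
    have step1 : ∀ q ∈ (words (E := E) L) ×ˢ (words (E := E) L),
        ENNReal.ofReal (r ^ j) * (if r ^ j < dW S xs (((q.1 ++ win ++ q.2).drop d).take (j+2))
          then Wgt S μ (q.1 ++ win ++ q.2) else 0) ≤ f (q.1 ++ win ++ q.2) := by
      intro q _
      by_cases hcond : r ^ j < dW S xs (((q.1 ++ win ++ q.2).drop d).take (j+2))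
      · rw [if_pos hcond, hf, mul_comm]
        exact mul_le_mul_right (ENNReal.ofReal_le_ofReal hcond.le) _
      · rw [if_neg hcond, mul_zero]
        exact zero_le
    calc ∑ q ∈ (words (E := E) L) ×ˢ (words (E := E) L), ENNReal.ofReal (r ^ j)
          * (if r ^ j < dW S xs (((q.1 ++ win ++ q.2).drop d).take (j+2))
              then Wgt S μ (q.1 ++ win ++ q.2) else 0)
        ≤ ∑ q ∈ (words (E := E) L) ×ˢ (words (E := E) L), f (q.1 ++ win ++ q.2) :=
          Finset.sum_le_sum step1
      _ = ∑ l ∈ ((words (E := E) L) ×ˢ (words (E := E) L)).image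
            (fun q : List E × List E => q.1 ++ win ++ q.2), f l := by
          rw [Finset.sum_image]
          intro q hq q' hq' h
          simp only [Finset.mem_coe, Finset.mem_product] at hq hq'
          have h1 : (q.1 ++ win).length = (q'.1 ++ win).length := by
            simp [mem_words.1 hq.1, mem_words.1 hq'.1]
          obtain ⟨h2, h3⟩ := List.append_inj h h1
          obtain ⟨h4, -⟩ := List.append_inj h2 (by simp [mem_words.1 hq.1, mem_words.1 hq'.1])
          exact Prod.ext h4 h3
      _ ≤ ∑ l ∈ words (E := E) (d + ((j+2) + k3)), f l := by
          refine Finset.sum_le_sum_of_subset ?_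
          intro l hl
          simp only [Finset.mem_image] at hl
          obtain ⟨q, hq, rfl⟩ := hl
          simp only [Finset.mem_product] at hq
          rw [mem_words]
          simp [mem_words.1 hq.1, mem_words.1 hq.2, hwinlen]
          omega
  have key2 : ∑ l ∈ words (E := E) (d + ((j+2) + k3)), f l
      ≤ ENNReal.ofReal (S.a ^ (j+1)) * K1 := Eall_bound S μ hμ hinv xs hxs d j k3
  have key3 : ENNReal.ofReal (S.a ^ (j+1))
      = ENNReal.ofReal (r ^ j) * ENNReal.ofReal (S.a * r ^ j) := by
    rw [← ENNReal.ofReal_mul (pow_nonneg hrpos.le j)]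
    congr 1
    have hsq : r ^ 2 = S.a := Real.sq_sqrt S.a_pos.le
    calc S.a ^ (j+1) = S.a * (r^2) ^ j := by rw [hsq]; ring
      _ = r ^ j * (S.a * r ^ j) := by ring
  have := le_trans key1 (le_trans key2 (by rw [key3, mul_assoc]))
  exact (ENNReal.mul_le_mul_iff_right hθ0 hθt).1 this

/-- existence of a good word at each level -/
lemma exists_good_q (hμ : IsProbabilityMeasure μ) (hinv : S.adjoint μ = μ)
    (xs : Fin N → K) (hxs : ∀ i, xs i ∈ S.Ks i)
    (n L T : ℕ) (win : List E) (hwinlen : win.length = 2*n+1)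
    (hT : (ENNReal.ofReal (2 * S.a) * (∫⁻ x, ENNReal.ofReal (phi S xs x) ∂μ)
            + ENNReal.ofReal (Cc S xs)) * ENNReal.ofReal S.a
          * ((∑' b : ℤ, ENNReal.ofReal (Real.sqrt (Real.sqrt S.a)) ^ (2 * b.natAbs))
              * (∑' j : ℕ, ENNReal.ofReal (Real.sqrt (Real.sqrt S.a)) ^ j))
          * ENNReal.ofReal (Real.sqrt (Real.sqrt S.a)) ^ T
        < Wgt S μ win) :
    ∃ q ∈ (words (E := E) L) ×ˢ (words (E := E) L),
      Wgt S μ (q.1 ++ win ++ q.2) ≠ 0 ∧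
      ∀ (b : ℤ) (j : ℕ), 2 * b.natAbs + T ≤ j → -((n+L:ℕ):ℤ) ≤ b - j - 1 → b ≤ ((n+L:ℕ):ℤ) →
        dW S xs (((q.1 ++ win ++ q.2).drop ((b - j - 1 + (n+L:ℕ)).toNat)).take (j+2))
          ≤ Real.sqrt S.a ^ j := by
  classical
  set k : ℕ := n + L with hk
  set r : ℝ := Real.sqrt S.a with hr
  set qv : ℝ := Real.sqrt r with hqv
  set v : ℝ≥0∞ := ENNReal.ofReal qv with hv
  set K1 : ℝ≥0∞ := ENNReal.ofReal (2 * S.a) * (∫⁻ x, ENNReal.ofReal (phi S xs x) ∂μ)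
      + ENNReal.ofReal (Cc S xs) with hK1
  set FL : Finset (ℤ × ℕ) := ((Finset.Icc (-(k:ℤ)) (k:ℤ)) ×ˢ (Finset.range (2*k+2))).filter
    (fun bj => 2 * bj.1.natAbs + T ≤ bj.2 ∧ -(k:ℤ) ≤ bj.1 - bj.2 - 1 ∧ bj.1 ≤ (k:ℤ)) with hFL
  have hrpos : 0 < r := Real.sqrt_pos.2 S.a_pos
  have hq0 : 0 ≤ qv := Real.sqrt_nonneg r
  have hq2 : qv ^ 2 = r := Real.sq_sqrt hrpos.le
  by_contra hcon
  push_neg at hcon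
  have hcover : ∀ q ∈ (words (E := E) L) ×ˢ (words (E := E) L),
      Wgt S μ (q.1 ++ win ++ q.2) ≤ ∑ bj ∈ FL,
        (if Real.sqrt S.a ^ bj.2 < dW S xs
            (((q.1 ++ win ++ q.2).drop ((bj.1 - bj.2 - 1 + (n+L:ℕ)).toNat)).take (bj.2+2))
          then Wgt S μ (q.1 ++ win ++ q.2) else 0) := by
    intro q hq
    by_cases hW : Wgt S μ (q.1 ++ win ++ q.2) = 0
    · rw [hW]
      exact zero_le
    · obtain ⟨b, j, hc1, hc2, hc3, hviol⟩ := hcon q hq hW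
      have hmem : (b, j) ∈ FL := by
        rw [hFL, Finset.mem_filter]
        refine ⟨Finset.mem_product.2 ⟨Finset.mem_Icc.2 ⟨by omega, by omega⟩,
          Finset.mem_range.2 (by omega)⟩, hc1, hc2, hc3⟩
      have hterm : (if Real.sqrt S.a ^ j < dW S xs
            (((q.1 ++ win ++ q.2).drop ((b - j - 1 + (n+L:ℕ)).toNat)).take (j+2))
          then Wgt S μ (q.1 ++ win ++ q.2) else 0) = Wgt S μ (q.1 ++ win ++ q.2) :=
        if_pos hviol
      calc Wgt S μ (q.1 ++ win ++ q.2)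
          = (if Real.sqrt S.a ^ j < dW S xs
                (((q.1 ++ win ++ q.2).drop ((b - j - 1 + (n+L:ℕ)).toNat)).take (j+2))
              then Wgt S μ (q.1 ++ win ++ q.2) else 0) := hterm.symm
        _ ≤ _ := Finset.single_le_sum (f := fun bj : ℤ × ℕ => (if Real.sqrt S.a ^ bj.2 < dW S xs
              (((q.1 ++ win ++ q.2).drop ((bj.1 - bj.2 - 1 + (n+L:ℕ)).toNat)).take (bj.2+2))
            then Wgt S μ (q.1 ++ win ++ q.2) else 0)) (fun bj _ => zero_le) hmem
  have hchain : Wgt S μ win < Wgt S μ win := by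
    calc Wgt S μ win
        = ∑ q ∈ (words (E := E) L) ×ˢ (words (E := E) L), Wgt S μ (q.1 ++ win ++ q.2) :=
          (sum_Wgt_ext S μ hinv win L).symm
      _ ≤ ∑ q ∈ (words (E := E) L) ×ˢ (words (E := E) L), ∑ bj ∈ FL,
            (if Real.sqrt S.a ^ bj.2 < dW S xs
                (((q.1 ++ win ++ q.2).drop ((bj.1 - bj.2 - 1 + (n+L:ℕ)).toNat)).take (bj.2+2))
              then Wgt S μ (q.1 ++ win ++ q.2) else 0) :=
          Finset.sum_le_sum hcover
      _ = ∑ bj ∈ FL, ∑ q ∈ (words (E := E) L) ×ˢ (words (E := E) L),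
            (if Real.sqrt S.a ^ bj.2 < dW S xs
                (((q.1 ++ win ++ q.2).drop ((bj.1 - bj.2 - 1 + (n+L:ℕ)).toNat)).take (bj.2+2))
              then Wgt S μ (q.1 ++ win ++ q.2) else 0) := Finset.sum_comm
      _ ≤ ∑ bj ∈ FL, ENNReal.ofReal (S.a * r ^ bj.2) * K1 := by
          refine Finset.sum_le_sum fun bj hbj => ?_
          rw [hFL, Finset.mem_filter] at hbj
          exact markov_bound S μ hμ hinv xs hxs n L win hwinlen bj.1 bj.2 hbj.2.2.1 hbj.2.2.2
      _ ≤ ∑ bj ∈ FL, K1 * ENNReal.ofReal S.a * (v ^ T * (v ^ (2 * bj.1.natAbs) * v ^ bj.2)) := by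
          refine Finset.sum_le_sum fun bj hbj => ?_
          rw [hFL, Finset.mem_filter] at hbj
          have hcond : 2 * bj.1.natAbs + T ≤ bj.2 := hbj.2.1
          have hrj : r ^ bj.2 ≤ qv ^ (T + 2 * bj.1.natAbs + bj.2) := by
            have h1 : r ^ bj.2 = qv ^ (2 * bj.2) := by rw [pow_mul, hq2]
            rw [h1]
            have hr1 : r < 1 := by
              nlinarith [Real.sq_sqrt S.a_pos.le, Real.sqrt_nonneg S.a, S.a_lt_one]
            have hqv1 : qv ≤ 1 := by nlinarith [hq2, hq0, hr1]
            exact pow_le_pow_of_le_one hq0 hqv1 (by omega)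
          calc ENNReal.ofReal (S.a * r ^ bj.2) * K1
              = K1 * ENNReal.ofReal S.a * ENNReal.ofReal (r ^ bj.2) := by
                rw [ENNReal.ofReal_mul S.a_pos.le]; ring
            _ ≤ K1 * ENNReal.ofReal S.a * ENNReal.ofReal (qv ^ (T + 2 * bj.1.natAbs + bj.2)) :=
                mul_le_mul_right (ENNReal.ofReal_le_ofReal hrj) _
            _ = K1 * ENNReal.ofReal S.a * (v ^ T * (v ^ (2 * bj.1.natAbs) * v ^ bj.2)) := by
                rw [hv, ← ENNReal.ofReal_pow hq0, ← ENNReal.ofReal_pow hq0,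
                  ← ENNReal.ofReal_pow hq0, ← ENNReal.ofReal_mul (pow_nonneg hq0 _),
                  ← ENNReal.ofReal_mul (pow_nonneg hq0 _), ← pow_add, ← pow_add, add_assoc]
      _ = K1 * ENNReal.ofReal S.a * v ^ T
            * ∑ bj ∈ FL, v ^ (2 * bj.1.natAbs) * v ^ bj.2 := by
          rw [Finset.mul_sum]
          refine Finset.sum_congr rfl fun bj _ => by ring
      _ ≤ K1 * ENNReal.ofReal S.a * v ^ T
            * ((∑' b : ℤ, v ^ (2 * b.natAbs)) * (∑' j : ℕ, v ^ j)) :=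
          mul_le_mul_right (sum_le_Z v FL) _
      _ = K1 * ENNReal.ofReal S.a
            * ((∑' b : ℤ, v ^ (2 * b.natAbs)) * (∑' j : ℕ, v ^ j)) * v ^ T := by ring
      _ < Wgt S μ win := hT
  exact absurd hchain (lt_irrefl _)

end Chunk9


-- ===== chunk 9b : level element =====
section Chunk9b
variable {K : Type*} [MetricSpace K] [MeasurableSpace K] [BorelSpace K]
  {N : ℕ} {E : Type*} [Fintype E] [DecidableEq E]
  (S : CMS K N E) (μ : Measure K)

lemma listOf_eq_ofFn (ζ : ℤ → E) : ∀ (k : ℕ) (s : ℤ),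
    listOf ζ s k = List.ofFn (fun i : Fin k => ζ (s + i)) := by
  intro k
  induction k with
  | zero => intro s; simp
  | succ k ih =>
      intro s
      rw [listOf_succ, List.ofFn_succ, ih (s+1)]
      congr 1
      · simp
      · refine congrArg List.ofFn (funext fun i => ?_)
        congr 1
        have : ((i.succ : ℕ) : ℤ) = (i : ℕ) + 1 := by simp
        rw [this]
        ring

lemma exists_level_elem (hμ : IsProbabilityMeasure μ) (hinv : S.adjoint μ = μ)
    (xs : Fin N → K) (hxs : ∀ i, xs i ∈ S.Ks i)
    (σ : ℤ → E) (hσ : σ ∈ S.SigmaG) (n L T : ℕ) (e₀ : E)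
    (hT : (ENNReal.ofReal (2 * S.a) * (∫⁻ x, ENNReal.ofReal (phi S xs x) ∂μ)
            + ENNReal.ofReal (Cc S xs)) * ENNReal.ofReal S.a
          * ((∑' b : ℤ, ENNReal.ofReal (Real.sqrt (Real.sqrt S.a)) ^ (2 * b.natAbs))
              * (∑' j : ℕ, ENNReal.ofReal (Real.sqrt (Real.sqrt S.a)) ^ j))
          * ENNReal.ofReal (Real.sqrt (Real.sqrt S.a)) ^ T
        < Wgt S μ (listOf σ (-(n:ℤ)) (2*n+1))) :
    ∃ ζ : ℤ → E,
      (∀ l : ℤ, -(n:ℤ) ≤ l → l ≤ (n:ℤ) → ζ l = σ l) ∧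
      (∀ l : ℤ, -((n+L:ℕ):ℤ) ≤ l → l < ((n+L:ℕ):ℤ) → S.τ (ζ l) = S.ι (ζ (l+1))) ∧
      (∀ (b : ℤ) (j : ℕ), 2 * b.natAbs + T ≤ j → -((n+L:ℕ):ℤ) ≤ b - j - 1 →
        b ≤ ((n+L:ℕ):ℤ) →
        dW S xs (listOf ζ (b - j - 1) (j+2)) ≤ Real.sqrt S.a ^ j) := by
  set win : List E := listOf σ (-(n:ℤ)) (2*n+1) with hwin
  have hwinlen : win.length = 2*n+1 := listOf_length σ _ _
  obtain ⟨q, hq, hWne, hgood⟩ := exists_good_q S μ hμ hinv xs hxs n L T win hwinlen hT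
  set k : ℕ := n + L with hk
  set W : List E := q.1 ++ win ++ q.2 with hWdef
  simp only [Finset.mem_product] at hq
  have hlen : W.length = 2*k+1 := by
    rw [hWdef]
    simp [mem_words.1 hq.1, mem_words.1 hq.2, hwinlen]
    omega
  refine ⟨tauOf e₀ W (-(k:ℤ)), ?_, ?_, ?_⟩
  · -- window agreement
    intro l hl1 hl2
    have h1 : tauOf e₀ W (-(k:ℤ)) l = W.getD (l + k).toNat e₀ := by
      rw [tauOf]
      congr 1
      omega
    rw [h1, hWdef]
    have hi1 : (l + (k:ℤ)).toNat < (q.1 ++ win).length := by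
      simp [mem_words.1 hq.1, hwinlen]
      omega
    rw [List.getD_append _ _ _ _ hi1]
    have hi2 : q.1.length ≤ (l + (k:ℤ)).toNat := by
      rw [mem_words.1 hq.1]
      omega
    rw [List.getD_append_right _ _ _ _ hi2, hwin]
    rw [listOf_getD σ e₀ _ _ _ (by rw [mem_words.1 hq.1] at hi2 ⊢; omega)]
    congr 1
    rw [mem_words.1 hq.1]
    omega
  · -- adjacency
    have hex : ∃ x : K, S.cylWeight x W ≠ 0 := by
      by_contra hall
      push_neg at hall
      apply hWne
      rw [Wgt]
      have : ∀ x : K, ENNReal.ofReal (S.cylWeight x W) = 0 := by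
        intro x
        rw [hall x]
        simp
      simp [this]
    obtain ⟨x, hx⟩ := hex
    have hchain := chain_of_cylW_ne_zero S W x hx
    intro l hl1 hl2
    have h1 : tauOf e₀ W (-(k:ℤ)) l = W.getD (l + k).toNat e₀ := by
      rw [tauOf]; congr 1; omega
    have h2 : tauOf e₀ W (-(k:ℤ)) (l+1) = W.getD ((l + k).toNat + 1) e₀ := by
      rw [tauOf]; congr 1; omega
    rw [h1, h2]
    exact chain_getD S e₀ W hchain (l + k).toNat (by omega)
  · -- increment bounds
    intro b j h1 h2 h3
    have heq := listOf_tauOf e₀ W (-(k:ℤ)) (j+2) (b - j - 1) (by omega) (by omega)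
    have heq2 : (b - (j:ℤ) - 1 - (-(k:ℤ))).toNat = (b - j - 1 + k).toNat := by omega
    rw [heq, heq2]
    exact hgood b j h1 h2 h3

end Chunk9b

end CMSDense

-- stmt 9
theorem cms_Y_dense_in_SigmaG
    {K : Type*} [MetricSpace K] [MeasurableSpace K] [BorelSpace K]
    {N : ℕ} {E : Type*} [Fintype E] [TopologicalSpace E] [DiscreteTopology E]
    (S : CMS K N E)
    (hProper : ∀ A : Set K, Bornology.IsBounded A → IsCompact (closure A))
    (hOpen : ∀ i, IsOpen (S.Ks i))
    (hDini : ∀ e, DiniOn (S.p e) (S.Ks (S.ι e)))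
    (δ : ℝ) (hδ : 0 < δ) (hp : ∀ e, ∀ x ∈ S.Ks (S.ι e), δ ≤ S.p e x)
    (μ : Measure K) (hμ : IsProbabilityMeasure μ) (hinv : S.adjoint μ = μ)
    (hpos : ∀ e, 0 < μ (S.Ks (S.ι e)))
    (xs : Fin N → K) (hxs : ∀ i, xs i ∈ S.Ks i) :
    S.SigmaG ⊆ closure (S.Yset xs) := by
  classical
  intro σ hσ
  letI : DecidableEq E := Classical.decEq E
  have hr0 : (0:ℝ) ≤ Real.sqrt S.a := Real.sqrt_nonneg _
  have hrpos : 0 < Real.sqrt S.a := Real.sqrt_pos.2 S.a_pos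
  have hrsq : Real.sqrt S.a ^ 2 = S.a := Real.sq_sqrt S.a_pos.le
  have hr1 : Real.sqrt S.a < 1 := by nlinarith [S.a_lt_one]
  have hq0 : (0:ℝ) ≤ Real.sqrt (Real.sqrt S.a) := Real.sqrt_nonneg _
  have hq2 : Real.sqrt (Real.sqrt S.a) ^ 2 = Real.sqrt S.a := Real.sq_sqrt hr0
  have hq1 : Real.sqrt (Real.sqrt S.a) < 1 := by nlinarith [hq0, hq2, hr1, hrpos]
  set v : ℝ≥0∞ := ENNReal.ofReal (Real.sqrt (Real.sqrt S.a)) with hv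
  have hv1 : v < 1 := by rw [hv]; exact ENNReal.ofReal_lt_one.2 hq1
  set Phi : ℝ≥0∞ := ∫⁻ x, ENNReal.ofReal (CMSDense.phi S xs x) ∂μ with hPhi
  have hPhitop : Phi ≠ ⊤ :=
    ne_top_of_le_ne_top ENNReal.ofReal_ne_top (CMSDense.moment S μ hμ hinv xs hxs)
  set K1 : ℝ≥0∞ := ENNReal.ofReal (2 * S.a) * Phi + ENNReal.ofReal (CMSDense.Cc S xs) with hK1
  have hK1top : K1 ≠ ⊤ := by
    rw [hK1]
    exact ENNReal.add_ne_top.2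
      ⟨ENNReal.mul_ne_top ENNReal.ofReal_ne_top hPhitop, ENNReal.ofReal_ne_top⟩
  set Zv : ℝ≥0∞ := (∑' b : ℤ, v ^ (2 * b.natAbs)) * (∑' j : ℕ, v ^ j) with hZv
  have hZtop : Zv ≠ ⊤ := CMSDense.Zfin v hv1
  set Ksum : ℝ≥0∞ := K1 * ENNReal.ofReal S.a * Zv with hKsum
  have hKsumtop : Ksum ≠ ⊤ :=
    ENNReal.mul_ne_top (ENNReal.mul_ne_top hK1top ENNReal.ofReal_ne_top) hZtop
  suffices key : ∀ n : ℕ, ∃ ζ : ℤ → E,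
      (∀ l : ℤ, -(n:ℤ) ≤ l → l ≤ (n:ℤ) → ζ l = σ l) ∧ ζ ∈ S.Yset xs by
    choose g hg1 hg2 using key
    have htend : Tendsto g atTop (nhds σ) := by
      rw [tendsto_pi_nhds]
      intro l
      have hev : (fun n : ℕ => g n l) =ᶠ[atTop] (fun _ => σ l) := by
        rw [Filter.EventuallyEq, Filter.eventually_atTop]
        exact ⟨l.natAbs, fun m hm => hg1 m l (by omega) (by omega)⟩
      exact Filter.Tendsto.congr' hev.symm tendsto_const_nhds
    exact mem_closure_of_tendsto htend (Filter.Eventually.of_forall hg2)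
  intro n
  set M0 : ℝ≥0∞ := CMSDense.Wgt S μ (CMSDense.listOf σ (-(n:ℤ)) (2*n+1)) with hM0
  have hM0pos : 0 < M0 := CMSDense.Wgt_listOf_pos S μ δ hδ hp hpos hσ (-(n:ℤ)) (2*n+1)
  have hM0top : M0 ≠ ⊤ :=
    ne_top_of_le_ne_top (by simp) (CMSDense.Wgt_le_one S μ hμ _)
  obtain ⟨T, hT⟩ := CMSDense.exists_T Ksum M0 hKsumtop hM0pos hM0top v hv1
  rw [hKsum, hK1, hZv, hPhi, hM0] at hT
  set Cs : ℕ → Set (ℤ → E) := fun L =>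
    {ζ | (∀ l : ℤ, -(n:ℤ) ≤ l → l ≤ (n:ℤ) → ζ l = σ l) ∧
      (∀ l : ℤ, -((n+L:ℕ):ℤ) ≤ l → l < ((n+L:ℕ):ℤ) → S.τ (ζ l) = S.ι (ζ (l+1))) ∧
      (∀ (b : ℤ) (j : ℕ), 2 * b.natAbs + T ≤ j → -((n+L:ℕ):ℤ) ≤ b - j - 1 →
        b ≤ ((n+L:ℕ):ℤ) →
        CMSDense.dW S xs (CMSDense.listOf ζ (b - j - 1) (j+2)) ≤ Real.sqrt S.a ^ j)} with hCs
  have hdec : ∀ L, Cs (L+1) ⊆ Cs L := by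
    intro L ζ hζ
    obtain ⟨h1, h2, h3⟩ := hζ
    exact ⟨h1,
      fun l hl1 hl2 => h2 l (by omega) (by omega),
      fun b j hb1 hb2 hb3 => h3 b j hb1 (by omega) (by omega)⟩
  have hclosed : ∀ L, IsClosed (Cs L) := by
    intro L
    have e1 : IsClosed {ζ : ℤ → E | ∀ l : ℤ, -(n:ℤ) ≤ l → l ≤ (n:ℤ) → ζ l = σ l} := by
      have heq : {ζ : ℤ → E | ∀ l : ℤ, -(n:ℤ) ≤ l → l ≤ (n:ℤ) → ζ l = σ l}
          = ⋂ (l : ℤ), ⋂ (_ : -(n:ℤ) ≤ l), ⋂ (_ : l ≤ (n:ℤ)), {ζ : ℤ → E | ζ l = σ l} := by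
        ext ζ; simp
      rw [heq]
      exact isClosed_iInter fun l => isClosed_iInter fun _ => isClosed_iInter fun _ =>
        isClosed_eq (continuous_apply l) continuous_const
    have e2 : IsClosed {ζ : ℤ → E |
        ∀ l : ℤ, -((n+L:ℕ):ℤ) ≤ l → l < ((n+L:ℕ):ℤ) → S.τ (ζ l) = S.ι (ζ (l+1))} := by
      have heq : {ζ : ℤ → E |
          ∀ l : ℤ, -((n+L:ℕ):ℤ) ≤ l → l < ((n+L:ℕ):ℤ) → S.τ (ζ l) = S.ι (ζ (l+1))}
          = ⋂ (l : ℤ), ⋂ (_ : -((n+L:ℕ):ℤ) ≤ l), ⋂ (_ : l < ((n+L:ℕ):ℤ)),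
            (fun ζ : ℤ → E => ((ζ l, ζ (l+1)) : E × E)) ⁻¹'
              {p : E × E | S.τ p.1 = S.ι p.2} := by
        ext ζ; simp
      rw [heq]
      exact isClosed_iInter fun l => isClosed_iInter fun _ => isClosed_iInter fun _ =>
        (isClosed_discrete _).preimage ((continuous_apply l).prodMk (continuous_apply (l+1)))
    have e3 : IsClosed {ζ : ℤ → E | ∀ (b : ℤ) (j : ℕ), 2 * b.natAbs + T ≤ j →
        -((n+L:ℕ):ℤ) ≤ b - j - 1 → b ≤ ((n+L:ℕ):ℤ) →
        CMSDense.dW S xs (CMSDense.listOf ζ (b - j - 1) (j+2)) ≤ Real.sqrt S.a ^ j} := by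
      have heq : {ζ : ℤ → E | ∀ (b : ℤ) (j : ℕ), 2 * b.natAbs + T ≤ j →
          -((n+L:ℕ):ℤ) ≤ b - j - 1 → b ≤ ((n+L:ℕ):ℤ) →
          CMSDense.dW S xs (CMSDense.listOf ζ (b - j - 1) (j+2)) ≤ Real.sqrt S.a ^ j}
          = ⋂ (b : ℤ), ⋂ (j : ℕ), ⋂ (_ : 2 * b.natAbs + T ≤ j),
            ⋂ (_ : -((n+L:ℕ):ℤ) ≤ b - j - 1), ⋂ (_ : b ≤ ((n+L:ℕ):ℤ)),
            (fun (ζ : ℤ → E) (i : Fin (j+2)) => ζ (b - j - 1 + i)) ⁻¹'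
              {u : Fin (j+2) → E | CMSDense.dW S xs (List.ofFn u) ≤ Real.sqrt S.a ^ j} := by
        ext ζ
        simp only [Set.mem_setOf_eq, Set.mem_iInter, Set.mem_preimage]
        constructor
        · intro h b j h1 h2 h3
          have h4 := h b j h1 h2 h3
          rwa [CMSDense.listOf_eq_ofFn] at h4
        · intro h b j h1 h2 h3
          have h4 := h b j h1 h2 h3
          rwa [CMSDense.listOf_eq_ofFn]
      rw [heq]
      exact isClosed_iInter fun b => isClosed_iInter fun j => isClosed_iInter fun _ =>
        isClosed_iInter fun _ => isClosed_iInter fun _ =>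
        (isClosed_discrete _).preimage (continuous_pi fun i => continuous_apply _)
    have hsplit : Cs L = {ζ : ℤ → E | ∀ l : ℤ, -(n:ℤ) ≤ l → l ≤ (n:ℤ) → ζ l = σ l}
        ∩ ({ζ : ℤ → E |
            ∀ l : ℤ, -((n+L:ℕ):ℤ) ≤ l → l < ((n+L:ℕ):ℤ) → S.τ (ζ l) = S.ι (ζ (l+1))}
          ∩ {ζ : ℤ → E | ∀ (b : ℤ) (j : ℕ), 2 * b.natAbs + T ≤ j →
            -((n+L:ℕ):ℤ) ≤ b - j - 1 → b ≤ ((n+L:ℕ):ℤ) →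
            CMSDense.dW S xs (CMSDense.listOf ζ (b - j - 1) (j+2)) ≤ Real.sqrt S.a ^ j}) := by
      rw [hCs]; ext ζ; simp [Set.mem_setOf_eq, Set.mem_inter_iff, and_assoc]
    rw [hsplit]
    exact e1.inter (e2.inter e3)
  have hne : ∀ L, (Cs L).Nonempty := by
    intro L
    obtain ⟨ζ, hζ1, hζ2, hζ3⟩ :=
      CMSDense.exists_level_elem S μ hμ hinv xs hxs σ hσ n L T (σ 0) hT
    exact ⟨ζ, hζ1, hζ2, hζ3⟩
  have hcpt : IsCompact (Cs 0) := (hclosed 0).isCompact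
  obtain ⟨ζ, hζ⟩ := IsCompact.nonempty_iInter_of_sequence_nonempty_isCompact_isClosed
    Cs hdec hne hcpt hclosed
  rw [Set.mem_iInter] at hζ
  refine ⟨ζ, (hζ 0).1, ?_⟩
  have hζG : ζ ∈ S.SigmaG := by
    intro l
    exact (hζ (l.natAbs + 1)).2.1 l (by omega) (by omega)
  refine CMSDense.mem_Yset_of S xs hζG ?_
  intro b
  refine CMSDense.conv_of_tail_bound S hProper xs ζ b (Real.sqrt S.a) hr0 hr1
    (2 * b.natAbs + T) ?_
  intro j hj
  exact (hζ (b.natAbs + j + 1)).2.2 b j hj (by omega) (by omega)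
end
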